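/- arXiv:2206.04649 — 10 statements merged into one kernel-verified Lean document; each statement's English description precedes it below -/
import Mathlib

section
/- If W : ℝ → [0,∞) is C² with W(a) = W(b) = 0 and there exists κ > 0 such that W''(u) ≥ 2κ² for every u outside (a,b), then |W'(u)|/√(W(u)) ≥ κ for every u ∈ ℝ \ [a,b]. -/
lemma aux_one_side (W : ℝ → ℝ) (b κ : ℝ)
    (hWnn : ∀ u, 0 ≤ W u) (hWC2 : ContDiff ℝ 2 W)
    (hWb : W b = 0) (hκ : 0 < κ)
    (hW'' : ∀ u, b ≤ u → 2 * κ ^ 2 ≤ deriv (deriv W) u) :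
    ∀ u, b < u → 0 < W u ∧ κ ^ 2 * W u ≤ (deriv W u) ^ 2 := by
  have hd1 : Differentiable ℝ W := hWC2.differentiable (by norm_num)
  have hC1 : ContDiff ℝ 1 (deriv W) := by
    have h := (contDiff_succ_iff_deriv (n := 1)).mp (by exact_mod_cast hWC2)
    exact h.2.2
  have hd2 : Differentiable ℝ (deriv W) := hC1.differentiable (by norm_num)
  have hW'b : deriv W b = 0 := by
    have hmin : IsLocalMin W b := by
      apply Filter.Eventually.filter_mono le_rfl
      filter_upwards with x
      rw [hWb]; exact hWnn x
    exact hmin.deriv_eq_zero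
  -- W' u ≥ 2κ²(u-b) on [b,∞)
  have key1 : ∀ u, b ≤ u → 2 * κ ^ 2 * (u - b) ≤ deriv W u := by
    intro u hu
    have mono : MonotoneOn (fun t => deriv W t - 2 * κ ^ 2 * (t - b)) (Set.Ici b) := by
      apply monotoneOn_of_deriv_nonneg (convex_Ici b)
      · exact (hd2.continuous.sub (by continuity)).continuousOn
      · intro x _
        exact ((hd2 x).sub (((differentiable_id.sub_const b).const_mul _) x)).differentiableWithinAt
      · intro x hx
        rw [interior_Ici] at hx
        have h1 : HasDerivAt (fun t => deriv W t - 2 * κ ^ 2 * (t - b))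
            (deriv (deriv W) x - 2 * κ ^ 2 * 1) x :=
          ((hd2 x).hasDerivAt).sub (((hasDerivAt_id x).sub_const b).const_mul _)
        rw [h1.deriv]
        have := hW'' x hx.le
        nlinarith
    have := mono Set.self_mem_Ici hu hu
    simp only [hW'b, sub_self, mul_zero, sub_zero, zero_sub] at this
    linarith
  -- W u ≥ κ²(u-b)² on [b,∞)
  have key2 : ∀ u, b ≤ u → κ ^ 2 * (u - b) ^ 2 ≤ W u := by
    intro u hu
    have mono : MonotoneOn (fun t => W t - κ ^ 2 * (t - b) ^ 2) (Set.Ici b) := by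
      apply monotoneOn_of_deriv_nonneg (convex_Ici b)
      · exact (hd1.continuous.sub (by continuity)).continuousOn
      · intro x _
        exact ((hd1 x).sub ((((differentiable_id.sub_const b).pow 2).const_mul _) x)).differentiableWithinAt
      · intro x hx
        rw [interior_Ici] at hx
        have h1 : HasDerivAt (fun t => W t - κ ^ 2 * (t - b) ^ 2)
            (deriv W x - κ ^ 2 * (2 * (x - b) ^ 1 * 1)) x :=
          ((hd1 x).hasDerivAt).sub ((((hasDerivAt_id x).sub_const b).pow 2).const_mul _)
        rw [h1.deriv]
        have := key1 x hx.le
        nlinarith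
    have := mono Set.self_mem_Ici hu hu
    simp only [hWb, sub_self, mul_zero, zero_sub] at this
    nlinarith [this]
  -- (W')² - κ² W is nondecreasing on [b,∞)
  have key3 : ∀ u, b ≤ u → κ ^ 2 * W u ≤ (deriv W u) ^ 2 := by
    intro u hu
    have mono : MonotoneOn (fun t => (deriv W t) ^ 2 - κ ^ 2 * W t) (Set.Ici b) := by
      apply monotoneOn_of_deriv_nonneg (convex_Ici b)
      · exact ((hd2.continuous.pow 2).sub (continuous_const.mul hd1.continuous)).continuousOn
      · intro x _
        exact (((hd2 x).pow 2).sub ((hd1 x).const_mul _)).differentiableWithinAt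
      · intro x hx
        rw [interior_Ici] at hx
        have h1 : HasDerivAt (fun t => (deriv W t) ^ 2 - κ ^ 2 * W t)
            (2 * (deriv W x) ^ 1 * deriv (deriv W) x - κ ^ 2 * deriv W x) x :=
          (((hd2 x).hasDerivAt).pow 2).sub (((hd1 x).hasDerivAt).const_mul _)
        rw [h1.deriv]
        have h2 := hW'' x hx.le
        have hxb : b < x := hx
        have h3 : 0 ≤ deriv W x := by
          have := key1 x hx.le
          nlinarith
        nlinarith
    have := mono Set.self_mem_Ici hu hu
    simp only [hW'b, hWb, mul_zero, sub_zero] at this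
    nlinarith [this]
  intro u hu
  refine ⟨?_, key3 u hu.le⟩
  have h2 := key2 u hu.le
  have h0 : 0 < κ ^ 2 * (u - b) ^ 2 := by
    have : 0 < u - b := sub_pos.mpr hu
    positivity
  linarith

/-- If `W : ℝ → [0,∞)` is `C²` with `W a = W b = 0`, and `κ > 0` satisfies
`W'' u ≥ 2κ²` for every `u` outside `(a,b)`, then `|W' u| / √(W u) ≥ κ`
for every `u ∈ ℝ \ [a,b]`. -/
theorem stmt1 (W : ℝ → ℝ) (a b κ : ℝ) (hab : a < b)
    (hWnn : ∀ u, 0 ≤ W u) (hWC2 : ContDiff ℝ 2 W)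
    (hWa : W a = 0) (hWb : W b = 0) (hκ : 0 < κ)
    (hW'' : ∀ u, u ∉ Set.Ioo a b → 2 * κ ^ 2 ≤ iteratedDeriv 2 W u) :
    ∀ u, u ∉ Set.Icc a b → κ ≤ |deriv W u| / Real.sqrt (W u) := by
  have hiter : ∀ u, iteratedDeriv 2 W u = deriv (deriv W) u := by
    intro u
    rw [iteratedDeriv_succ, iteratedDeriv_one]
  -- key inequality for all u outside [a,b]
  have main : ∀ u, u ∉ Set.Icc a b → 0 < W u ∧ κ ^ 2 * W u ≤ (deriv W u) ^ 2 := by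
    intro u hu
    rcases lt_or_ge u a with h | hge
    · -- u < a : reflect
      set V : ℝ → ℝ := fun x => W (-x) with hV
      have hV' : deriv V = fun x => -deriv W (-x) := by
        funext x
        exact deriv_comp_neg W x
      have hV'' : ∀ x, deriv (deriv V) x = deriv (deriv W) (-x) := by
        intro x
        rw [hV']
        have : deriv (fun x : ℝ => -deriv W (-x)) x
            = -deriv (fun x : ℝ => deriv W (-x)) x := deriv.neg
        rw [this, deriv_comp_neg (deriv W) x, neg_neg]
      have haux := aux_one_side V (-a) κ (fun x => hWnn (-x))
        (hWC2.comp contDiff_neg) (by simp [hV, hWa]) hκ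
        (by
          intro x hx
          rw [hV'' x, ← hiter (-x)]
          exact hW'' (-x) (by
            intro hmem
            rcases hmem with ⟨h1, _⟩
            linarith))
        (-u) (by linarith)
      have h1 : V (-u) = W u := by simp [hV]
      have h2 : deriv V (-u) = -deriv W u := by rw [hV']; simp
      rw [h1, h2] at haux
      constructor
      · exact haux.1
      · have := haux.2; nlinarith [this]
    · -- b < u
      have h : b < u := by
        by_contra hb'
        push_neg at hb'
        exact hu ⟨hge, hb'⟩
      exact aux_one_side W b κ hWnn hWC2 hWb hκ
        (fun x hx => by
          rw [← hiter x]
          exact hW'' x (by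
            intro hmem
            rcases hmem with ⟨_, h2⟩
            linarith)) u h
  intro u hu
  obtain ⟨hWpos, hineq⟩ := main u hu
  rw [le_div_iff₀ (Real.sqrt_pos.mpr hWpos)]
  calc κ * Real.sqrt (W u) = Real.sqrt (κ ^ 2 * W u) := by
        rw [Real.sqrt_mul (sq_nonneg κ), Real.sqrt_sq hκ.le]
    _ ≤ Real.sqrt ((deriv W u) ^ 2) := Real.sqrt_le_sqrt hineq
    _ = |deriv W u| := Real.sqrt_sq_eq_abs _
end

section
/- Let W : ℝ → [0,∞) satisfy: W ∈ C²(ℝ), W(a) = W(b) = 0, W > 0 on (a,b), and W''(a) > 0, W''(b) > 0. Let q₀ solve q₀'(s) = √(W(q₀(s))) with q₀(0) = (a+b)/2. Then q₀ is defined on all of ℝ and a < q₀(s) < b for every s ∈ ℝ. -/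
open Set intervalIntegral

set_option maxHeartbeats 1000000

/-- Under assumptions (W1), (W2), (W3), the optimal profile `q₀` solving
`q₀' = √(W ∘ q₀)`, `q₀ 0 = (a+b)/2` is globally defined and takes values in `(a,b)`. -/
theorem stmt3 (W : ℝ → ℝ) (a b : ℝ) (hab : a < b) (hWnn : ∀ u, 0 ≤ W u)
    (hWC2 : ContDiff ℝ 2 W) (hWa : W a = 0) (hWb : W b = 0)
    (hWpos : ∀ u ∈ Set.Ioo a b, 0 < W u)
    (hW''a : 0 < iteratedDeriv 2 W a) (hW''b : 0 < iteratedDeriv 2 W b) :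
    ∃ q₀ : ℝ → ℝ, q₀ 0 = (a + b) / 2 ∧
      (∀ s, HasDerivAt q₀ (Real.sqrt (W (q₀ s))) s) ∧
      ∀ s, q₀ s ∈ Set.Ioo a b := by
  classical
  set m : ℝ := (a + b) / 2 with hm_def
  have hm : m ∈ Set.Ioo a b := ⟨by simp only [hm_def]; linarith, by simp only [hm_def]; linarith⟩
  -- basic differentiability facts
  have h21 : (2 : WithTop ℕ∞) = 1 + 1 := by norm_num
  have hsplit := (contDiff_succ_iff_deriv).mp (h21 ▸ hWC2)
  have hWdiff : Differentiable ℝ W := hsplit.1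
  have hW'C1 : ContDiff ℝ 1 (deriv W) := hsplit.2.2
  have hW'diff : Differentiable ℝ (deriv W) := hW'C1.differentiable one_ne_zero
  have hiter2 : iteratedDeriv 2 W = deriv (deriv W) := by
    rw [show (2 : ℕ) = 1 + 1 from rfl, iteratedDeriv_succ, iteratedDeriv_one]
  -- the function g = (√W)⁻¹
  set g : ℝ → ℝ := fun u => (Real.sqrt (W u))⁻¹ with hg_def
  have hgpos : ∀ u ∈ Set.Ioo a b, 0 < g u := fun u hu =>
    inv_pos.2 (Real.sqrt_pos.2 (hWpos u hu))
  have hgcont : ContinuousOn g (Set.Ioo a b) :=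
    ((Real.continuous_sqrt.comp hWC2.continuous).continuousOn).inv₀
      fun u hu => (Real.sqrt_pos.2 (hWpos u hu)).ne'
  have hgmeas : Measurable g := ((Real.continuous_sqrt.comp hWC2.continuous).measurable).inv
  have huIcc : ∀ p ∈ Set.Ioo a b, ∀ q ∈ Set.Ioo a b, Set.uIcc p q ⊆ Set.Ioo a b :=
    fun p hp q hq => Set.ordConnected_Ioo.uIcc_subset hp hq
  have hint : ∀ p ∈ Set.Ioo a b, ∀ q ∈ Set.Ioo a b, IntervalIntegrable g MeasureTheory.volume p q :=
    fun p hp q hq => (hgcont.mono (huIcc p hp q hq)).intervalIntegrable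
  -- T q = ∫ m..q g
  set T : ℝ → ℝ := fun q => ∫ u in m..q, g u with hT_def
  have hTderiv : ∀ x ∈ Set.Ioo a b, HasDerivAt T (g x) x := by
    intro x hx
    refine intervalIntegral.integral_hasDerivAt_right (hint m hm x hx)
      ⟨Set.univ, Filter.univ_mem, hgmeas.aestronglyMeasurable.restrict⟩ ?_
    exact hgcont.continuousAt (isOpen_Ioo.mem_nhds hx)
  have hTcont : ContinuousOn T (Set.Ioo a b) := fun x hx =>
    (hTderiv x hx).continuousAt.continuousWithinAt
  have hTmono : StrictMonoOn T (Set.Ioo a b) := by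
    apply strictMonoOn_of_deriv_pos (convex_Ioo a b) hTcont
    intro x hx
    rw [interior_Ioo] at hx
    rw [(hTderiv x hx).deriv]
    exact hgpos x hx
  -- bound on the second derivative
  obtain ⟨C, hC⟩ : ∃ C, ∀ x ∈ Set.Icc a b, |iteratedDeriv 2 W x| ≤ C := by
    obtain ⟨C, hC⟩ := (isCompact_Icc (a := a) (b := b)).exists_bound_of_continuousOn
      ((hWC2.continuous_iteratedDeriv 2 le_rfl).continuousOn)
    exact ⟨C, fun x hx => by simpa using hC x hx⟩
  set M : ℝ := max C 1 with hM_def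
  have hM1 : (1 : ℝ) ≤ M := le_max_right _ _
  have hM0 : (0 : ℝ) < M := lt_of_lt_of_le one_pos hM1
  have hMbound : ∀ x ∈ Set.Icc a b, |deriv (deriv W) x| ≤ M := fun x hx =>
    (hiter2 ▸ hC x hx).trans (le_max_left _ _)
  -- derivatives of W vanish at a and b
  have hW'a : deriv W a = 0 := by
    have : IsLocalMin W a := Filter.Eventually.of_forall fun x => hWa ▸ hWnn x
    exact this.deriv_eq_zero
  have hW'b : deriv W b = 0 := by
    have : IsLocalMin W b := Filter.Eventually.of_forall fun x => hWb ▸ hWnn x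
    exact this.deriv_eq_zero
  -- quadratic bounds near the endpoints via the mean value theorem
  have hquadb : ∀ u ∈ Set.Ico a b, W u ≤ M * (b - u) ^ 2 := by
    intro u hu
    have hub : u < b := hu.2
    obtain ⟨η, hη, hηs⟩ := exists_hasDerivAt_eq_slope W (deriv W) hub
      (hWdiff.continuous.continuousOn) (fun x _ => (hWdiff x).hasDerivAt)
    obtain ⟨ζ, hζ, hζs⟩ := exists_hasDerivAt_eq_slope (deriv W) (deriv (deriv W)) hη.2
      (hW'diff.continuous.continuousOn) (fun x _ => (hW'diff x).hasDerivAt)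
    have hζab : ζ ∈ Set.Icc a b := ⟨le_trans hu.1 (le_of_lt (hη.1.trans hζ.1)),
      le_of_lt hζ.2⟩
    have hMb := hMbound ζ hζab
    rw [hWb] at hηs
    rw [hW'b] at hζs
    have habs := abs_le.mp hMb
    have hneη : b - η ≠ 0 := ne_of_gt (by linarith [hη.2] : (0:ℝ) < b - η)
    have hneu : b - u ≠ 0 := ne_of_gt (by linarith : (0:ℝ) < b - u)
    rw [eq_div_iff hneη] at hζs
    rw [eq_div_iff hneu] at hηs
    have h2 : W u = deriv (deriv W) ζ * (b - η) * (b - u) := by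
      linear_combination hηs - (b - u) * hζs
    have e1 : (0:ℝ) < b - η := by linarith [hη.2]
    have e2 : b - η ≤ b - u := by linarith [hη.1]
    have e3 : (0:ℝ) < b - u := by linarith
    nlinarith [mul_nonneg (mul_nonneg (sub_nonneg.2 habs.2) e1.le) e3.le,
      mul_nonneg (mul_nonneg hM0.le (sub_nonneg.2 e2)) e3.le]
  have hquada : ∀ u ∈ Set.Ioc a b, W u ≤ M * (u - a) ^ 2 := by
    intro u hu
    have hau : a < u := hu.1
    obtain ⟨η, hη, hηs⟩ := exists_hasDerivAt_eq_slope W (deriv W) hau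
      (hWdiff.continuous.continuousOn) (fun x _ => (hWdiff x).hasDerivAt)
    obtain ⟨ζ, hζ, hζs⟩ := exists_hasDerivAt_eq_slope (deriv W) (deriv (deriv W)) hη.1
      (hW'diff.continuous.continuousOn) (fun x _ => (hW'diff x).hasDerivAt)
    have hζab : ζ ∈ Set.Icc a b := ⟨le_of_lt hζ.1,
      le_of_lt (lt_of_lt_of_le (hζ.2.trans hη.2) hu.2)⟩
    have hMb := hMbound ζ hζab
    rw [hWa] at hηs
    rw [hW'a] at hζs
    have habs := abs_le.mp hMb
    have hneη : η - a ≠ 0 := ne_of_gt (by linarith [hη.1] : (0:ℝ) < η - a)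
    have hneu : u - a ≠ 0 := ne_of_gt (by linarith : (0:ℝ) < u - a)
    rw [eq_div_iff hneη] at hζs
    rw [eq_div_iff hneu] at hηs
    have h2 : W u = deriv (deriv W) ζ * (η - a) * (u - a) := by
      linear_combination -hηs - (u - a) * hζs
    have e1 : (0:ℝ) < η - a := by linarith [hη.1]
    have e2 : η - a ≤ u - a := by linarith [hη.2]
    have e3 : (0:ℝ) < u - a := by linarith
    nlinarith [mul_nonneg (mul_nonneg (sub_nonneg.2 habs.2) e1.le) e3.le,
      mul_nonneg (mul_nonneg hM0.le (sub_nonneg.2 e2)) e3.le]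
  set c : ℝ := Real.sqrt M with hc_def
  have hc0 : 0 < c := Real.sqrt_pos.2 hM0
  -- sqrt bound on the right
  have hsqb : ∀ u ∈ Set.Ico a b, Real.sqrt (W u) ≤ c * (b - u) := by
    intro u hu
    have h1 : Real.sqrt (W u) ≤ Real.sqrt (M * (b - u) ^ 2) :=
      Real.sqrt_le_sqrt (hquadb u hu)
    calc Real.sqrt (W u) ≤ Real.sqrt (M * (b - u) ^ 2) := h1
      _ = c * (b - u) := by
          rw [Real.sqrt_mul (le_of_lt hM0), Real.sqrt_sq (by linarith [hu.2] : (0:ℝ) ≤ b - u)]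
  have hsqa : ∀ u ∈ Set.Ioc a b, Real.sqrt (W u) ≤ c * (u - a) := by
    intro u hu
    calc Real.sqrt (W u) ≤ Real.sqrt (M * (u - a) ^ 2) := Real.sqrt_le_sqrt (hquada u hu)
      _ = c * (u - a) := by
          rw [Real.sqrt_mul (le_of_lt hM0), Real.sqrt_sq (by linarith [hu.1] : (0:ℝ) ≤ u - a)]
  -- comparison integrals: lower bound of T near b
  have hTlb : ∀ q ∈ Set.Ico m b, c⁻¹ * (Real.log (b - m) - Real.log (b - q)) ≤ T q := by
    intro q hq
    have hq' : q ∈ Set.Ioo a b := ⟨lt_of_lt_of_le hm.1 hq.1, hq.2⟩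
    have hIcc_sub : Set.Icc m q ⊆ Set.Ico a b := fun x hx =>
      ⟨le_of_lt (lt_of_lt_of_le hm.1 hx.1), lt_of_le_of_lt hx.2 hq.2⟩
    have hf : ∀ u ∈ Set.uIcc m q, HasDerivAt (fun u => -(c⁻¹ * Real.log (b - u)))
        (c⁻¹ * (b - u)⁻¹) u := by
      intro u hu
      rw [Set.uIcc_of_le hq.1] at hu
      have hbu : 0 < b - u := by linarith [(hIcc_sub hu).2]
      have h1 : HasDerivAt (fun u : ℝ => b - u) (-1) u := by
        simpa using (hasDerivAt_id u).const_sub b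
      have h2 : HasDerivAt (fun u : ℝ => Real.log (b - u)) ((b - u)⁻¹ * (-1)) u :=
        (Real.hasDerivAt_log hbu.ne').comp u h1
      have h3 := (h2.const_mul c⁻¹).neg
      refine h3.congr_deriv ?_
      ring
    have hcontlb : ContinuousOn (fun u => c⁻¹ * (b - u)⁻¹) (Set.uIcc m q) := by
      rw [Set.uIcc_of_le hq.1]
      exact (continuousOn_const.mul ((continuousOn_const.sub continuousOn_id).inv₀
        (fun x hx => by
          have := (hIcc_sub hx).2; exact ne_of_gt (by linarith : (0:ℝ) < b - x))))
    have hintlb : IntervalIntegrable (fun u => c⁻¹ * (b - u)⁻¹) MeasureTheory.volume m q :=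
      hcontlb.intervalIntegrable
    have hcompare : ∫ u in m..q, c⁻¹ * (b - u)⁻¹ ≤ T q := by
      apply intervalIntegral.integral_mono_on hq.1 hintlb (hint m hm q hq')
      intro x hx
      have hx' := hIcc_sub hx
      have hbu : 0 < b - x := by linarith [hx'.2]
      have hWx : 0 < Real.sqrt (W x) := Real.sqrt_pos.2 (hWpos x ⟨lt_of_lt_of_le hm.1 hx.1, hx'.2⟩)
      have := hsqb x hx'
      have h4 : (c * (b - x))⁻¹ ≤ (Real.sqrt (W x))⁻¹ := inv_anti₀ hWx this
      calc c⁻¹ * (b - x)⁻¹ = (c * (b - x))⁻¹ := (mul_inv c _).symm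
        _ ≤ g x := h4
    have heval : ∫ u in m..q, c⁻¹ * (b - u)⁻¹
        = c⁻¹ * (Real.log (b - m) - Real.log (b - q)) := by
      rw [intervalIntegral.integral_eq_sub_of_hasDerivAt hf hintlb]
      ring
    linarith [hcompare, heval ▸ hcompare]
  -- upper bound of T near a
  have hTub : ∀ q ∈ Set.Ioc a m, T q ≤ -(c⁻¹ * (Real.log (m - a) - Real.log (q - a))) := by
    intro q hq
    have hq' : q ∈ Set.Ioo a b := ⟨hq.1, lt_of_le_of_lt hq.2 hm.2⟩
    have hIcc_sub : Set.Icc q m ⊆ Set.Ioc a b := fun x hx =>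
      ⟨lt_of_lt_of_le hq.1 hx.1, le_of_lt (lt_of_le_of_lt hx.2 hm.2)⟩
    have hf : ∀ u ∈ Set.uIcc q m, HasDerivAt (fun u => c⁻¹ * Real.log (u - a))
        (c⁻¹ * (u - a)⁻¹) u := by
      intro u hu
      rw [Set.uIcc_of_le hq.2] at hu
      have hua : 0 < u - a := by linarith [(hIcc_sub hu).1]
      have h1 : HasDerivAt (fun u : ℝ => u - a) 1 u := by
        simpa using (hasDerivAt_id u).sub_const a
      have h2 : HasDerivAt (fun u : ℝ => Real.log (u - a)) ((u - a)⁻¹ * 1) u :=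
        by have := (Real.hasDerivAt_log hua.ne').comp u h1; exact this
      have h3 := h2.const_mul c⁻¹
      refine h3.congr_deriv ?_
      ring
    have hcontlb : ContinuousOn (fun u => c⁻¹ * (u - a)⁻¹) (Set.uIcc q m) := by
      rw [Set.uIcc_of_le hq.2]
      exact (continuousOn_const.mul ((continuousOn_id.sub continuousOn_const).inv₀
        (fun x hx => by
          have := (hIcc_sub hx).1; exact ne_of_gt (by linarith : (0:ℝ) < x - a))))
    have hintlb : IntervalIntegrable (fun u => c⁻¹ * (u - a)⁻¹) MeasureTheory.volume q m :=
      hcontlb.intervalIntegrable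
    have hcompare : ∫ u in q..m, c⁻¹ * (u - a)⁻¹ ≤ ∫ u in q..m, g u := by
      apply intervalIntegral.integral_mono_on hq.2 hintlb (hint q hq' m hm)
      intro x hx
      have hx' := hIcc_sub hx
      have hua : 0 < x - a := by linarith [hx'.1]
      have hxab : x ∈ Set.Ioo a b := ⟨hx'.1, lt_of_le_of_lt hx.2 hm.2⟩
      have hWx : 0 < Real.sqrt (W x) := Real.sqrt_pos.2 (hWpos x hxab)
      have := hsqa x hx'
      have h4 : (c * (x - a))⁻¹ ≤ (Real.sqrt (W x))⁻¹ := inv_anti₀ hWx this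
      calc c⁻¹ * (x - a)⁻¹ = (c * (x - a))⁻¹ := (mul_inv c _).symm
        _ ≤ g x := h4
    have heval : ∫ u in q..m, c⁻¹ * (u - a)⁻¹
        = c⁻¹ * (Real.log (m - a) - Real.log (q - a)) := by
      rw [intervalIntegral.integral_eq_sub_of_hasDerivAt hf hintlb]
      ring
    have hTq : T q = -∫ u in q..m, g u := by
      rw [hT_def]
      simp [intervalIntegral.integral_symm q m]
    rw [hTq]
    rw [heval] at hcompare
    linarith
  -- surjectivity of T : Ioo a b → ℝ
  have hsurj : ∀ s : ℝ, ∃ q ∈ Set.Ioo a b, T q = s := by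
    intro s
    -- right point
    set s' : ℝ := max s 0 with hs'_def
    have hs'0 : 0 ≤ s' := le_max_right _ _
    set ε : ℝ := (b - m) * Real.exp (-(c * s')) with hε_def
    have hbm : 0 < b - m := by linarith [hm.2]
    have hε0 : 0 < ε := mul_pos hbm (Real.exp_pos _)
    have hεle : ε ≤ b - m := by
      have : Real.exp (-(c * s')) ≤ 1 := Real.exp_le_one_iff.2 (neg_nonpos.2 (mul_nonneg hc0.le hs'0))
      nlinarith
    set qR : ℝ := b - ε with hqR_def
    have hqRm : m ≤ qR := by simp only [hqR_def]; linarith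
    have hqRb : qR < b := by simp only [hqR_def]; linarith
    have hqR : qR ∈ Set.Ioo a b := ⟨lt_of_lt_of_le hm.1 hqRm, hqRb⟩
    have hTqR : s ≤ T qR := by
      have h1 := hTlb qR ⟨hqRm, hqRb⟩
      have hlog : Real.log (b - qR) = Real.log (b - m) + -(c * s') := by
        have : b - qR = ε := by simp [hqR_def]
        rw [this, hε_def, Real.log_mul hbm.ne' (Real.exp_pos _).ne', Real.log_exp]
      rw [hlog] at h1
      have : c⁻¹ * (Real.log (b - m) - (Real.log (b - m) + -(c * s'))) = s' := by
        field_simp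
        ring
      rw [this] at h1
      exact le_trans (le_max_left s 0) h1
    -- left point
    set s'' : ℝ := max (-s) 0 with hs''_def
    have hs''0 : 0 ≤ s'' := le_max_right _ _
    set δ : ℝ := (m - a) * Real.exp (-(c * s'')) with hδ_def
    have hma : 0 < m - a := by linarith [hm.1]
    have hδ0 : 0 < δ := mul_pos hma (Real.exp_pos _)
    have hδle : δ ≤ m - a := by
      have : Real.exp (-(c * s'')) ≤ 1 := Real.exp_le_one_iff.2 (neg_nonpos.2 (mul_nonneg hc0.le hs''0))
      nlinarith
    set qL : ℝ := a + δ with hqL_def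
    have hqLm : qL ≤ m := by simp only [hqL_def]; linarith
    have hqLa : a < qL := by simp only [hqL_def]; linarith
    have hqL : qL ∈ Set.Ioo a b := ⟨hqLa, lt_of_le_of_lt hqLm hm.2⟩
    have hTqL : T qL ≤ s := by
      have h1 := hTub qL ⟨hqLa, hqLm⟩
      have hlog : Real.log (qL - a) = Real.log (m - a) + -(c * s'') := by
        have : qL - a = δ := by simp [hqL_def]
        rw [this, hδ_def, Real.log_mul hma.ne' (Real.exp_pos _).ne', Real.log_exp]
      rw [hlog] at h1
      have : -(c⁻¹ * (Real.log (m - a) - (Real.log (m - a) + -(c * s'')))) = -s'' := by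
        field_simp
        ring
      rw [this] at h1
      have h2 : -s ≤ s'' := le_max_left _ _
      linarith
    -- intermediate value theorem
    have hsub : Set.uIcc qL qR ⊆ Set.Ioo a b := huIcc qL hqL qR hqR
    have hIVT := intermediate_value_uIcc (hTcont.mono hsub)
    have hs_mem : s ∈ Set.Icc (T qL) (T qR) := ⟨hTqL, hTqR⟩
    obtain ⟨q, hq1, hq2⟩ := hIVT (Set.Icc_subset_uIcc hs_mem)
    exact ⟨q, hsub hq1, hq2⟩
  -- define q₀
  set q₀ : ℝ → ℝ := fun s => (hsurj s).choose with hq₀_def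
  have hq₀mem : ∀ s, q₀ s ∈ Set.Ioo a b := fun s => (hsurj s).choose_spec.1
  have hTq₀ : ∀ s, T (q₀ s) = s := fun s => (hsurj s).choose_spec.2
  have hq₀T : ∀ x ∈ Set.Ioo a b, q₀ (T x) = x := fun x hx =>
    hTmono.injOn (hq₀mem (T x)) hx (hTq₀ (T x))
  have hq₀mono : StrictMono q₀ := by
    intro s t hst
    rcases lt_trichotomy (q₀ s) (q₀ t) with h | h | h
    · exact h
    · exact absurd (by rw [← hTq₀ s, ← hTq₀ t, h]) (ne_of_lt hst)
    · have := hTmono (hq₀mem t) (hq₀mem s) h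
      rw [hTq₀ s, hTq₀ t] at this
      exact absurd this (not_lt.2 (le_of_lt hst))
  -- continuity of q₀ via the order isomorphism
  have hq₀cont : Continuous q₀ := by
    set f : ℝ → ↥(Set.Ioo a b) := fun s => ⟨q₀ s, hq₀mem s⟩ with hf_def
    have hfmono : StrictMono f := fun s t hst => Subtype.mk_lt_mk.2 (hq₀mono hst)
    have hfsurj : Function.Surjective f := by
      rintro ⟨x, hx⟩
      exact ⟨T x, Subtype.ext (hq₀T x hx)⟩
    have hcf : Continuous f := (StrictMono.orderIsoOfSurjective f hfmono hfsurj).continuous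
    exact continuous_subtype_val.comp hcf
  refine ⟨q₀, ?_, ?_, hq₀mem⟩
  · have hTm : T m = 0 := by simp [hT_def]
    have := hq₀T m hm
    rw [hTm] at this
    rw [this]
  · intro s
    have hx := hq₀mem s
    have hTd := hTderiv (q₀ s) hx
    have hgne : g (q₀ s) ≠ 0 := (hgpos (q₀ s) hx).ne'
    have h := HasDerivAt.of_local_left_inverse hq₀cont.continuousAt hTd hgne
      (Filter.Eventually.of_forall hTq₀)
    have : (g (q₀ s))⁻¹ = Real.sqrt (W (q₀ s)) := by rw [hg_def]; simp
    rwa [this] at h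
end

section
/- Let W : ℝ → [0,∞) be continuous with W(a) = W(b) = 0 and W > 0 on (a,b), and let q₀ : ℝ → (a,b) solve q₀' = √(W ∘ q₀) with q₀(0) = (a+b)/2. Then q₀ is strictly increasing and is a bijection from ℝ onto (a,b). -/
/-- The optimal profile `q₀ : ℝ → (a,b)` solving `q₀' = √(W ∘ q₀)` with
`q₀ 0 = (a+b)/2` is strictly increasing and a bijection from `ℝ` onto `(a,b)`. -/
theorem stmt4 (W : ℝ → ℝ) (a b : ℝ) (hab : a < b) (hWnn : ∀ u, 0 ≤ W u)
    (hWc : Continuous W) (hWa : W a = 0) (hWb : W b = 0)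
    (hWpos : ∀ u ∈ Set.Ioo a b, 0 < W u) (q₀ : ℝ → ℝ)
    (hq₀mem : ∀ s, q₀ s ∈ Set.Ioo a b)
    (hq₀ : ∀ s, HasDerivAt q₀ (Real.sqrt (W (q₀ s))) s)
    (hq₀0 : q₀ 0 = (a + b) / 2) :
    StrictMono q₀ ∧ Set.range q₀ = Set.Ioo a b := by
  have hdpos : ∀ s, 0 < Real.sqrt (W (q₀ s)) := fun s =>
    Real.sqrt_pos.2 (hWpos _ (hq₀mem s))
  have hcont : Continuous q₀ :=
    continuous_iff_continuousAt.2 fun s => (hq₀ s).continuousAt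
  have hsm : StrictMono q₀ := by
    apply strictMono_of_deriv_pos
    intro s
    rw [(hq₀ s).deriv]
    exact hdpos s
  refine ⟨hsm, ?_⟩
  have hmono : Monotone q₀ := hsm.monotone
  have hbddA : BddAbove (Set.range q₀) :=
    ⟨b, by rintro y ⟨s, rfl⟩; exact (hq₀mem s).2.le⟩
  have hbddB : BddBelow (Set.range q₀) :=
    ⟨a, by rintro y ⟨s, rfl⟩; exact (hq₀mem s).1.le⟩
  have hsqc : Continuous fun u => Real.sqrt (W u) := hWc.sqrt
  -- auxiliary: for c > 0 and s₀, the function g t = q₀ t - (c/2)*t has derivative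
  have hg : ∀ c : ℝ, ∀ t : ℝ,
      HasDerivAt (fun t => q₀ t - c / 2 * t) (Real.sqrt (W (q₀ t)) - c / 2) t := by
    intro c t
    exact ((hq₀ t).sub ((hasDerivAt_id t).const_mul (c / 2))).congr_deriv (by ring)
  -- limit at +∞ is b
  have htop : Filter.Tendsto q₀ Filter.atTop (nhds b) := by
    have h1 : Filter.Tendsto q₀ Filter.atTop (nhds (⨆ s, q₀ s)) :=
      tendsto_atTop_ciSup hmono hbddA
    have hLb : (⨆ s, q₀ s) ≤ b := ciSup_le fun s => (hq₀mem s).2.le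
    have haL : a < ⨆ s, q₀ s := lt_of_lt_of_le (hq₀mem 0).1 (le_ciSup hbddA 0)
    rcases eq_or_lt_of_le hLb with h | h
    · rwa [h] at h1
    · exfalso
      set L := ⨆ s, q₀ s with hLdef
      set c := Real.sqrt (W L) with hcdef
      have hcpos : 0 < c := Real.sqrt_pos.2 (hWpos _ ⟨haL, h⟩)
      have h2 : Filter.Tendsto (fun s => Real.sqrt (W (q₀ s))) Filter.atTop (nhds c) :=
        (hsqc.tendsto L).comp h1
      obtain ⟨s₀, hs₀⟩ := (h2.eventually (eventually_gt_nhds (by linarith : c / 2 < c))).exists_forall_of_atTop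
      have hgm : MonotoneOn (fun t => q₀ t - c / 2 * t) (Set.Ici s₀) := by
        apply monotoneOn_of_deriv_nonneg (convex_Ici s₀)
        · exact (Continuous.continuousOn (by continuity))
        · intro t ht
          exact ((hg c t).differentiableAt).differentiableWithinAt
        · intro t ht
          rw [interior_Ici] at ht
          rw [(hg c t).deriv]
          have := hs₀ t (le_of_lt ht)
          linarith
      set d := (b - a) * 2 / c with hddef
      have hd : c / 2 * d = b - a := by rw [hddef]; field_simp
      have hdnn : 0 ≤ d := div_nonneg (by nlinarith) hcpos.le
      have hle : q₀ s₀ - c / 2 * s₀ ≤ q₀ (s₀ + d) - c / 2 * (s₀ + d) :=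
        hgm (Set.self_mem_Ici) (by simp [hdnn]) (by linarith)
      have h3 := (hq₀mem (s₀ + d)).2
      have h4 := (hq₀mem s₀).1
      nlinarith
  -- limit at -∞ is a
  have hbot : Filter.Tendsto q₀ Filter.atBot (nhds a) := by
    have h1 : Filter.Tendsto q₀ Filter.atBot (nhds (⨅ s, q₀ s)) :=
      tendsto_atBot_ciInf hmono hbddB
    have haM : a ≤ ⨅ s, q₀ s := le_ciInf fun s => (hq₀mem s).1.le
    have hMb : (⨅ s, q₀ s) < b := lt_of_le_of_lt (ciInf_le hbddB 0) (hq₀mem 0).2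
    rcases eq_or_lt_of_le haM with h | h
    · rwa [← h] at h1
    · exfalso
      set M := ⨅ s, q₀ s with hMdef
      set c := Real.sqrt (W M) with hcdef
      have hcpos : 0 < c := Real.sqrt_pos.2 (hWpos _ ⟨h, hMb⟩)
      have h2 : Filter.Tendsto (fun s => Real.sqrt (W (q₀ s))) Filter.atBot (nhds c) :=
        (hsqc.tendsto M).comp h1
      obtain ⟨s₀, hs₀⟩ := (h2.eventually (eventually_gt_nhds (by linarith : c / 2 < c))).exists_forall_of_atBot
      have hgm : MonotoneOn (fun t => q₀ t - c / 2 * t) (Set.Iic s₀) := by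
        apply monotoneOn_of_deriv_nonneg (convex_Iic s₀)
        · exact (Continuous.continuousOn (by continuity))
        · intro t ht
          exact ((hg c t).differentiableAt).differentiableWithinAt
        · intro t ht
          rw [interior_Iic] at ht
          rw [(hg c t).deriv]
          have := hs₀ t (le_of_lt ht)
          linarith
      set d := (b - a) * 2 / c with hddef
      have hd : c / 2 * d = b - a := by rw [hddef]; field_simp
      have hdnn : 0 ≤ d := div_nonneg (by nlinarith) hcpos.le
      have hle : q₀ (s₀ - d) - c / 2 * (s₀ - d) ≤ q₀ s₀ - c / 2 * s₀ :=
        hgm (by simp [hdnn]) Set.self_mem_Iic (by linarith)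
      have h3 := (hq₀mem (s₀ - d)).1
      have h4 := (hq₀mem s₀).2
      nlinarith
  -- conclude range = Ioo a b
  apply Set.eq_of_subset_of_subset
  · rintro y ⟨s, rfl⟩; exact hq₀mem s
  · rintro y ⟨hy1, hy2⟩
    obtain ⟨s₂, hs₂⟩ := (htop.eventually (eventually_gt_nhds hy2)).exists
    obtain ⟨s₁, hs₁⟩ := (hbot.eventually (eventually_lt_nhds hy1)).exists
    exact intermediate_value_univ s₁ s₂ hcont ⟨hs₁.le, hs₂.le⟩
end

section
/- Let W : ℝ → [0,∞) be C² with consecutive zeros a < b, W > 0 on (a,b), and W''(a) > 0, W''(b) > 0. Let q₀ solve q₀' = √(W(q₀)), q₀(0) = (a+b)/2. Then there is a constant C > 0 such that b - q₀(s) ≤ C e^{-s/C} and q₀(s) - a ≤ C e^{s/C} for every s ∈ ℝ. -/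
open Real Set

lemma quadLB (W : ℝ → ℝ) (m b : ℝ) (hmb : m < b) (hWnn : ∀ u, 0 ≤ W u)
    (hWC2 : ContDiff ℝ 2 W) (hWb : W b = 0)
    (hWpos : ∀ u ∈ Set.Ico m b, 0 < W u)
    (hW''b : 0 < iteratedDeriv 2 W b) :
    ∃ c > 0, ∀ u ∈ Set.Icc m b, c * (b - u) ≤ Real.sqrt (W u) := by
  have hWd : Differentiable ℝ W := hWC2.differentiable (by norm_num)
  have hW'C1 : ContDiff ℝ 1 (deriv W) := by
    have h : (2 : WithTop ℕ∞) = 1 + 1 := by norm_num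
    rw [h, contDiff_succ_iff_deriv] at hWC2
    exact hWC2.2.2
  have hW'd : Differentiable ℝ (deriv W) := hW'C1.differentiable (by norm_num)
  have hW''cont : Continuous (deriv (deriv W)) := hW'C1.continuous_deriv le_rfl
  have hiter : iteratedDeriv 2 W = deriv (deriv W) := by
    rw [show (2:ℕ) = 1 + 1 from rfl, iteratedDeriv_succ, iteratedDeriv_one]
  rw [hiter] at hW''b
  set k := deriv (deriv W) b with hk
  -- W'(b) = 0
  have hW'b : deriv W b = 0 := by
    have hmin : IsLocalMin W b := Filter.Eventually.of_forall fun u => hWb ▸ hWnn u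
    exact hmin.deriv_eq_zero
  -- neighbourhood where W'' > k/2
  have hev : ∀ᶠ t in nhds b, k / 2 < deriv (deriv W) t :=
    (hW''cont.continuousAt).eventually (eventually_gt_nhds (by linarith))
  obtain ⟨δ, hδ, hball⟩ := Metric.eventually_nhds_iff.mp hev
  set u₁ := max m (b - δ/2) with hu₁
  have hmu₁ : m ≤ u₁ := le_max_left _ _
  have hu₁b : u₁ < b := by
    rw [hu₁, max_lt_iff]; constructor <;> linarith
  have hnear : ∀ t ∈ Set.Icc u₁ b, k / 2 ≤ deriv (deriv W) t := by
    intro t ht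
    refine le_of_lt (hball ?_)
    have h1 : b - δ/2 ≤ u₁ := le_max_right _ _
    have : |t - b| = b - t := by rw [abs_sub_comm]; exact abs_of_nonneg (by linarith [ht.2])
    rw [Real.dist_eq, this]; linarith [ht.1]
  -- Step A: quadratic bound near b
  have hstepA : ∀ u ∈ Set.Icc u₁ b, k/4 * (b - u)^2 ≤ W u := by
    -- first: deriv W t ≤ -(k/2) * (b - t) on Icc u₁ b
    have h1 : ∀ t ∈ Set.Icc u₁ b, deriv W t ≤ -(k/2) * (b - t) := by
      have hmono : MonotoneOn (fun t => deriv W t - k/2 * t) (Set.Icc u₁ b) := by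
        refine monotoneOn_of_deriv_nonneg (convex_Icc _ _) ?_ ?_ ?_
        · exact ((hW'd.continuous).sub (continuous_const.mul continuous_id)).continuousOn
        · exact ((hW'd.sub ((differentiable_id.const_mul _))).differentiableOn)
        · intro x hx
          rw [interior_Icc] at hx
          have hd : HasDerivAt (fun t => deriv W t - k/2 * t) (deriv (deriv W) x - k/2) x := by
            exact (((hW'd x).hasDerivAt).sub (((hasDerivAt_id x).const_mul (k/2)))).congr_deriv (by ring)
          rw [hd.deriv]
          have := hnear x ⟨hx.1.le, hx.2.le⟩
          linarith
      intro t ht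
      have := hmono ht (Set.right_mem_Icc.mpr (by linarith [ht.1, hu₁b])) ht.2
      simp only at this
      rw [hW'b] at this
      linarith
    have hanti : AntitoneOn (fun t => W t - k/4 * (b - t)^2) (Set.Icc u₁ b) := by
      refine antitoneOn_of_deriv_nonpos (convex_Icc _ _) ?_ ?_ ?_
      · exact ((hWd.continuous).sub (continuous_const.mul ((continuous_const.sub continuous_id).pow 2))).continuousOn
      · exact (hWd.sub ((((differentiable_const b).sub differentiable_id).pow 2).const_mul _)).differentiableOn
      · intro x hx
        rw [interior_Icc] at hx
        have hd : HasDerivAt (fun t => W t - k/4 * (b - t)^2) (deriv W x - k/4 * (2 * (b - x) * (-1))) x := by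
          have h2 : HasDerivAt (fun t => (b - t)^2) (2 * (b - x) * (-1)) x := by
            have := ((hasDerivAt_const x b).sub (hasDerivAt_id x)).pow 2
            exact this.congr_deriv (by norm_num)
          exact ((hWd x).hasDerivAt).sub (h2.const_mul (k/4))
        rw [hd.deriv]
        have := h1 x ⟨hx.1.le, hx.2.le⟩
        nlinarith [hx.2]
    intro u hu
    have := hanti hu (Set.right_mem_Icc.mpr (by linarith [hu.1, hu₁b])) hu.2
    simp only [hWb] at this
    nlinarith
  -- Step B: positive min on [m, u₁]
  obtain ⟨z, hz, hzmin⟩ := IsCompact.exists_isMinOn (isCompact_Icc (a := m) (b := u₁))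
    (Set.nonempty_Icc.mpr hmu₁) (hWd.continuous.continuousOn)
  have hz' : z ∈ Set.Ico m b := ⟨hz.1, lt_of_le_of_lt hz.2 hu₁b⟩
  set ε := W z with hε
  have hεpos : 0 < ε := hWpos z hz'
  have hstepB : ∀ u ∈ Set.Icc m u₁, ε / (b - m)^2 * (b - u)^2 ≤ W u := by
    intro u hu
    have h1 : ε ≤ W u := hzmin (Set.mem_Icc.mpr hu)
    have h2 : (b - u)^2 ≤ (b - m)^2 := by nlinarith [hu.1, hu.2, hu₁b]
    have h3 : (0:ℝ) < (b - m)^2 := by nlinarith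
    rw [div_mul_eq_mul_div, div_le_iff₀ h3]
    nlinarith
  -- combine
  have hk4 : 0 < k/4 := by linarith
  set c₀ := min (k/4) (ε / (b - m)^2) with hc₀
  have hc₀pos : 0 < c₀ := lt_min hk4 (div_pos hεpos (by nlinarith))
  have hquad : ∀ u ∈ Set.Icc m b, c₀ * (b - u)^2 ≤ W u := by
    intro u hu
    rcases le_total u u₁ with h | h
    · calc c₀ * (b-u)^2 ≤ ε / (b - m)^2 * (b - u)^2 := by
            nlinarith [min_le_right (k/4) (ε / (b-m)^2), sq_nonneg (b-u)]
        _ ≤ W u := hstepB u ⟨hu.1, h⟩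
    · calc c₀ * (b-u)^2 ≤ k/4 * (b - u)^2 := by
            nlinarith [min_le_left (k/4) (ε / (b-m)^2), sq_nonneg (b-u)]
        _ ≤ W u := hstepA u ⟨h, hu.2⟩
  refine ⟨Real.sqrt c₀, Real.sqrt_pos.mpr hc₀pos, fun u hu => ?_⟩
  have h1 : Real.sqrt (c₀ * (b-u)^2) ≤ Real.sqrt (W u) := Real.sqrt_le_sqrt (hquad u hu)
  rwa [Real.sqrt_mul hc₀pos.le, Real.sqrt_sq (by linarith [hu.2])] at h1

lemma oneSide (W : ℝ → ℝ) (a b : ℝ) (hab : a < b) (hWnn : ∀ u, 0 ≤ W u)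
    (hWC2 : ContDiff ℝ 2 W) (hWb : W b = 0)
    (hWpos : ∀ u ∈ Set.Ioo a b, 0 < W u)
    (hW''b : 0 < iteratedDeriv 2 W b)
    (q₀ : ℝ → ℝ) (hq₀mem : ∀ s, q₀ s ∈ Set.Ioo a b)
    (hq₀ : ∀ s, HasDerivAt q₀ (Real.sqrt (W (q₀ s))) s)
    (hq₀0 : q₀ 0 = (a + b) / 2) :
    ∃ C > 0, ∀ s : ℝ, b - q₀ s ≤ C * Real.exp (-s / C) := by
  set m := (a + b) / 2 with hm
  have ham : a < m := by rw [hm]; linarith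
  have hmb : m < b := by rw [hm]; linarith
  obtain ⟨c, hc, hlb⟩ := quadLB W m b hmb hWnn hWC2 hWb
    (fun u hu => hWpos u ⟨lt_of_lt_of_le ham hu.1, hu.2⟩) hW''b
  -- q₀ is monotone
  have hmono : Monotone q₀ := by
    refine monotone_of_deriv_nonneg (fun s => (hq₀ s).differentiableAt) (fun s => ?_)
    rw [(hq₀ s).deriv]; exact Real.sqrt_nonneg _
  have hmem2 : ∀ s : ℝ, 0 ≤ s → q₀ s ∈ Set.Icc m b := fun s hs =>
    ⟨hq₀0 ▸ hmono hs, (hq₀mem s).2.le⟩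
  -- Gronwall: g s = (b - q₀ s) * exp (c s) is antitone on Ici 0
  have hg : ∀ s : ℝ, HasDerivAt (fun s => (b - q₀ s) * Real.exp (c * s))
      ((c * (b - q₀ s) - Real.sqrt (W (q₀ s))) * Real.exp (c * s)) s := by
    intro s
    have h1 : HasDerivAt (fun s => b - q₀ s) (-Real.sqrt (W (q₀ s))) s := by
      exact (hq₀ s).const_sub b
    have h2 : HasDerivAt (fun s => Real.exp (c * s)) (Real.exp (c * s) * c) s := by
      simpa using ((hasDerivAt_id s).const_mul c).exp
    have := h1.mul h2
    exact this.congr_deriv (by ring)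
  have hanti : AntitoneOn (fun s => (b - q₀ s) * Real.exp (c * s)) (Set.Ici 0) := by
    refine antitoneOn_of_deriv_nonpos (convex_Ici 0)
      (fun s _ => ((hg s).differentiableAt).continuousAt.continuousWithinAt)
      (fun s _ => ((hg s).differentiableAt).differentiableWithinAt) (fun s hs => ?_)
    rw [interior_Ici] at hs
    rw [(hg s).deriv]
    have hqs := hmem2 s (le_of_lt hs)
    have := hlb (q₀ s) hqs
    have he : (0:ℝ) < Real.exp (c * s) := Real.exp_pos _
    nlinarith
  have hbound : ∀ s : ℝ, 0 ≤ s → b - q₀ s ≤ (b - a) * Real.exp (-(c * s)) := by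
    intro s hs
    have h0 := hanti (Set.self_mem_Ici) hs hs
    simp only [mul_zero, Real.exp_zero, mul_one, hq₀0] at h0
    have h1 : b - m ≤ b - a := by linarith
    have he : (0:ℝ) < Real.exp (c * s) := Real.exp_pos _
    have key : b - q₀ s = ((b - q₀ s) * Real.exp (c * s)) * (Real.exp (c * s))⁻¹ := by
      field_simp
    rw [Real.exp_neg, key]
    exact mul_le_mul_of_nonneg_right (h0.trans h1) (inv_nonneg.mpr he.le)
  refine ⟨max (b - a) (1/c), lt_of_lt_of_le (by linarith) (le_max_left _ _), fun s => ?_⟩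
  set C := max (b - a) (1/c) with hC
  have hCpos : 0 < C := lt_of_lt_of_le (by linarith) (le_max_left _ _)
  have hCba : b - a ≤ C := le_max_left _ _
  have hCc : 1 / C ≤ c := by
    rw [div_le_iff₀ hCpos]
    have h1 : 1/c ≤ C := le_max_right _ _
    calc (1:ℝ) = c * (1/c) := by field_simp
      _ ≤ c * C := by nlinarith
  rcases le_or_gt 0 s with hs | hs
  · calc b - q₀ s ≤ (b - a) * Real.exp (-(c * s)) := hbound s hs
      _ ≤ C * Real.exp (-s / C) := by
          have h2 : -(c * s) ≤ -s / C := by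
            rw [neg_div, neg_le_neg_iff]
            calc s / C = s * (1/C) := by ring
              _ ≤ s * c := by nlinarith
              _ = c * s := by ring
          exact mul_le_mul hCba (Real.exp_le_exp.mpr h2) (Real.exp_pos _).le hCpos.le
  · have h1 : b - q₀ s ≤ b - a := by linarith [(hq₀mem s).1]
    have h2 : (1:ℝ) ≤ Real.exp (-s / C) := by
      rw [Real.one_le_exp_iff, neg_div]
      have : 0 ≤ s / C → True := fun _ => trivial
      have hsC : s / C ≤ 0 := div_nonpos_of_nonpos_of_nonneg hs.le hCpos.le
      linarith
    nlinarith [Real.exp_pos (-s/C)]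

/-- Exponential convergence of the optimal profile to the wells:
`b - q₀ s ≤ C e^{-s/C}` and `q₀ s - a ≤ C e^{s/C}` for some `C > 0`. -/
theorem stmt5 (W : ℝ → ℝ) (a b : ℝ) (hab : a < b) (hWnn : ∀ u, 0 ≤ W u)
    (hWC2 : ContDiff ℝ 2 W) (hWa : W a = 0) (hWb : W b = 0)
    (hWpos : ∀ u ∈ Set.Ioo a b, 0 < W u)
    (hW''a : 0 < iteratedDeriv 2 W a) (hW''b : 0 < iteratedDeriv 2 W b)
    (q₀ : ℝ → ℝ) (hq₀mem : ∀ s, q₀ s ∈ Set.Ioo a b)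
    (hq₀ : ∀ s, HasDerivAt q₀ (Real.sqrt (W (q₀ s))) s)
    (hq₀0 : q₀ 0 = (a + b) / 2) :
    ∃ C > 0, ∀ s : ℝ,
      b - q₀ s ≤ C * Real.exp (-s / C) ∧ q₀ s - a ≤ C * Real.exp (s / C) := by
  obtain ⟨C₁, hC₁, hb1⟩ := oneSide W a b hab hWnn hWC2 hWb hWpos hW''b q₀ hq₀mem hq₀ hq₀0
  -- reflected problem
  set V : ℝ → ℝ := fun u => W (-u) with hV
  set q : ℝ → ℝ := fun s => -q₀ (-s) with hq
  have hVC2 : ContDiff ℝ 2 V := hWC2.comp (contDiff_id.neg)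
  have hVa : V (-a) = 0 := by simp [hV, hWa]
  have hVpos : ∀ u ∈ Set.Ioo (-b) (-a), 0 < V u := by
    intro u hu
    exact hWpos (-u) ⟨by linarith [hu.2], by linarith [hu.1]⟩
  have hV'' : 0 < iteratedDeriv 2 V (-a) := by
    rw [hV, iteratedDeriv_comp_neg]
    simpa using hW''a
  have hqmem : ∀ s, q s ∈ Set.Ioo (-b) (-a) := by
    intro s
    obtain ⟨h1, h2⟩ := hq₀mem (-s)
    exact ⟨by simp [hq]; linarith, by simp [hq]; linarith⟩
  have hqder : ∀ s, HasDerivAt q (Real.sqrt (V (q s))) s := by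
    intro s
    have h1 : HasDerivAt (fun s : ℝ => q₀ (-s)) (-Real.sqrt (W (q₀ (-s)))) s := by
      have := (hq₀ (-s)).comp s ((hasDerivAt_id s).neg)
      simpa [mul_comm, Function.comp_def] using this
    have h2 := h1.neg
    have h3 : V (q s) = W (q₀ (-s)) := by simp [hV, hq]
    rw [h3]
    exact h2.congr_deriv (neg_neg _)
  have hq0 : q 0 = (-b + -a) / 2 := by simp [hq, hq₀0]; ring
  obtain ⟨C₂, hC₂, hb2⟩ := oneSide V (-b) (-a) (by linarith) (fun u => hWnn (-u))
    hVC2 hVa hVpos hV'' q hqmem hqder hq0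
  -- combine
  set C := max (b - a) (max C₁ C₂) with hC
  have hCpos : 0 < C := lt_of_lt_of_le (by linarith) (le_max_left _ _)
  have hC1C : C₁ ≤ C := le_trans (le_max_left _ _) (le_max_right _ _)
  have hC2C : C₂ ≤ C := le_trans (le_max_right _ _) (le_max_right _ _)
  have hbaC : b - a ≤ C := le_max_left _ _
  refine ⟨C, hCpos, fun s => ⟨?_, ?_⟩⟩
  · rcases le_or_gt 0 s with hs | hs
    · calc b - q₀ s ≤ C₁ * Real.exp (-s / C₁) := hb1 s
        _ ≤ C * Real.exp (-s / C) := by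
            refine mul_le_mul hC1C (Real.exp_le_exp.mpr ?_) (Real.exp_pos _).le hCpos.le
            rw [neg_div, neg_div, neg_le_neg_iff]
            exact div_le_div_of_nonneg_left hs hC₁ hC1C
    · have h1 : b - q₀ s ≤ b - a := by linarith [(hq₀mem s).1]
      have h2 : (1:ℝ) ≤ Real.exp (-s / C) := by
        rw [Real.one_le_exp_iff, neg_div]
        have hsC : s / C ≤ 0 := div_nonpos_of_nonpos_of_nonneg hs.le hCpos.le
        linarith
      nlinarith [Real.exp_pos (-s/C)]
  · rcases le_or_gt s 0 with hs | hs
    · have h := hb2 (-s)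
      have h' : q₀ s - a ≤ C₂ * Real.exp (s / C₂) := by
        have he : -a - q (-s) = q₀ s - a := by simp [hq]; ring
        rw [he] at h
        simpa [neg_div] using h
      calc q₀ s - a ≤ C₂ * Real.exp (s / C₂) := h'
        _ ≤ C * Real.exp (s / C) := by
            refine mul_le_mul hC2C (Real.exp_le_exp.mpr ?_) (Real.exp_pos _).le hCpos.le
            have h1 : -s / C₂ ≤ -s / C → True := fun _ => trivial
            rw [div_le_div_iff₀ hC₂ hCpos]
            nlinarith
    · have h1 : q₀ s - a ≤ b - a := by linarith [(hq₀mem s).2]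
      have h2 : (1:ℝ) ≤ Real.exp (s / C) := by
        rw [Real.one_le_exp_iff]
        exact div_nonneg hs.le hCpos.le
      nlinarith [Real.exp_pos (s/C)]
end

section
/- Let W : ℝ → [0,∞) be C² with consecutive zeros a < b, W > 0 on (a,b), W''(a) > 0 and W''(b) > 0, and let q₀ be the solution of q₀' = √(W(q₀)), q₀(0) = (a+b)/2. Then there is a constant C > 0 such that 0 < q₀'(s) ≤ C e^{-|s|/C} for every s ∈ ℝ. -/
open Set

lemma aux_right (f f' f'' : ℝ → ℝ)
    (hf' : ∀ u, HasDerivAt f (f' u) u) (hf'' : ∀ u, HasDerivAt f' (f'' u) u)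
    (x y : ℝ) (hfy : f y = 0) (hf'y : f' y = 0)
    (h2 : ∀ u ∈ Icc x y, 0 ≤ f'' u) : ∀ u ∈ Icc x y, 0 ≤ f u := by
  have hmono : MonotoneOn f' (Icc x y) := by
    apply monotoneOn_of_deriv_nonneg (convex_Icc x y)
      (fun u _ => (hf'' u).differentiableAt.continuousAt.continuousWithinAt)
      (fun u _ => (hf'' u).differentiableAt.differentiableWithinAt)
    intro u hu
    rw [(hf'' u).deriv]
    exact h2 u (interior_subset hu)
  have hle : ∀ u ∈ Icc x y, f' u ≤ 0 := by
    intro u hu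
    have := hmono hu (right_mem_Icc.2 (hu.1.trans hu.2)) hu.2
    rwa [hf'y] at this
  have hanti : AntitoneOn f (Icc x y) := by
    apply antitoneOn_of_deriv_nonpos (convex_Icc x y)
      (fun u _ => (hf' u).differentiableAt.continuousAt.continuousWithinAt)
      (fun u _ => (hf' u).differentiableAt.differentiableWithinAt)
    intro u hu
    rw [(hf' u).deriv]
    exact hle u (interior_subset hu)
  intro u hu
  have := hanti hu (right_mem_Icc.2 (hu.1.trans hu.2)) hu.2
  rwa [hfy] at this

lemma aux_left (f f' f'' : ℝ → ℝ)
    (hf' : ∀ u, HasDerivAt f (f' u) u) (hf'' : ∀ u, HasDerivAt f' (f'' u) u)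
    (x y : ℝ) (hfx : f x = 0) (hf'x : f' x = 0)
    (h2 : ∀ u ∈ Icc x y, 0 ≤ f'' u) : ∀ u ∈ Icc x y, 0 ≤ f u := by
  have hmono : MonotoneOn f' (Icc x y) := by
    apply monotoneOn_of_deriv_nonneg (convex_Icc x y)
      (fun u _ => (hf'' u).differentiableAt.continuousAt.continuousWithinAt)
      (fun u _ => (hf'' u).differentiableAt.differentiableWithinAt)
    intro u hu
    rw [(hf'' u).deriv]
    exact h2 u (interior_subset hu)
  have hge : ∀ u ∈ Icc x y, 0 ≤ f' u := by
    intro u hu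
    have := hmono (left_mem_Icc.2 (hu.1.trans hu.2)) hu hu.1
    rwa [hf'x] at this
  have hmono2 : MonotoneOn f (Icc x y) := by
    apply monotoneOn_of_deriv_nonneg (convex_Icc x y)
      (fun u _ => (hf' u).differentiableAt.continuousAt.continuousWithinAt)
      (fun u _ => (hf' u).differentiableAt.differentiableWithinAt)
    intro u hu
    rw [(hf' u).deriv]
    exact hge u (interior_subset hu)
  intro u hu
  have := hmono2 (left_mem_Icc.2 (hu.1.trans hu.2)) hu hu.1
  rwa [hfx] at this

lemma hasDerivAt_quadR (c y : ℝ) (u : ℝ) :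
    HasDerivAt (fun x => c*(y-x)^2) (-(2*c*(y-u))) u := by
  have h := (((hasDerivAt_id u).const_sub y).pow 2).const_mul c
  simp only [id_eq] at h
  exact h.congr_deriv (by ring)

lemma hasDerivAt_quadL (c y : ℝ) (u : ℝ) :
    HasDerivAt (fun x => c*(x-y)^2) (2*c*(u-y)) u := by
  have h := (((hasDerivAt_id u).sub_const y).pow 2).const_mul c
  simp only [id_eq] at h
  exact h.congr_deriv (by ring)

set_option maxHeartbeats 1000000 in
lemma quad_bounds (W : ℝ → ℝ) (a b : ℝ) (hab : a < b) (hWnn : ∀ u, 0 ≤ W u)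
    (hWC2 : ContDiff ℝ 2 W) (hWa : W a = 0) (hWb : W b = 0)
    (hWpos : ∀ u ∈ Set.Ioo a b, 0 < W u)
    (hW''a : 0 < iteratedDeriv 2 W a) (hW''b : 0 < iteratedDeriv 2 W b) :
    ∃ K > 0, ∃ c > 0, ∀ u ∈ Icc a b,
      W u ≤ K*(b-u)^2 ∧ W u ≤ K*(u-a)^2 ∧ c*((u-a)*(b-u))^2 ≤ W u := by
  have h2 : ContDiff ℝ (1+1) W := by norm_num at hWC2 ⊢; exact hWC2
  have h1 : ContDiff ℝ 1 (deriv W) := (contDiff_succ_iff_deriv.mp h2).2.2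
  have hWd : Differentiable ℝ W := hWC2.differentiable two_ne_zero
  have hW1d : Differentiable ℝ (deriv W) := h1.differentiable one_ne_zero
  have hW2c : Continuous (deriv (deriv W)) := (contDiff_one_iff_deriv.mp h1).2
  have hIter : ∀ u, iteratedDeriv 2 W u = deriv (deriv W) u := by
    intro u; simp [iteratedDeriv_succ, iteratedDeriv_zero]
  rw [hIter a] at hW''a
  rw [hIter b] at hW''b
  have hmina : IsLocalMin W a := Filter.Eventually.of_forall (fun u => hWa ▸ hWnn u)
  have hminb : IsLocalMin W b := Filter.Eventually.of_forall (fun u => hWb ▸ hWnn u)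
  have hW'a : deriv W a = 0 := hmina.deriv_eq_zero
  have hW'b : deriv W b = 0 := hminb.deriv_eq_zero
  -- global upper bound M for the second derivative on [a,b]
  obtain ⟨zM, hzM, hzMmax⟩ := isCompact_Icc.exists_isMaxOn (nonempty_Icc.2 hab.le)
    (hW2c.continuousOn (s := Icc a b))
  set M := deriv (deriv W) zM with hMdef
  have hM : ∀ u ∈ Icc a b, deriv (deriv W) u ≤ M := fun u hu => (isMaxOn_iff.mp hzMmax) u hu
  clear_value M
  have hMpos : 0 < M := lt_of_lt_of_le hW''b (hM b ⟨hab.le, le_rfl⟩)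
  -- upper bound 1 : W u ≤ M/2 (b-u)²
  have hub1 : ∀ u ∈ Icc a b, 0 ≤ M/2*(b-u)^2 - W u := by
    apply aux_right (f' := fun u => M*(u-b) - deriv W u)
      (f'' := fun u => M - deriv (deriv W) u)
    · intro u
      have h := (hasDerivAt_quadR (M/2) b u).sub (hWd u).hasDerivAt
      exact h.congr_deriv (by ring)
    · intro u
      have h := (((hasDerivAt_id u).sub_const b).const_mul M).sub (hW1d u).hasDerivAt
      simp only [id_eq] at h
      exact h.congr_deriv (by ring)
    · simp [hWb]
    · simp [hW'b]
    · intro u hu; have := hM u hu; linarith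
  -- upper bound 2 : W u ≤ M/2 (u-a)²
  have hub2 : ∀ u ∈ Icc a b, 0 ≤ M/2*(u-a)^2 - W u := by
    apply aux_left (f' := fun u => M*(u-a) - deriv W u)
      (f'' := fun u => M - deriv (deriv W) u)
    · intro u
      have h := (hasDerivAt_quadL (M/2) a u).sub (hWd u).hasDerivAt
      exact h.congr_deriv (by ring)
    · intro u
      have h := (((hasDerivAt_id u).sub_const a).const_mul M).sub (hW1d u).hasDerivAt
      simp only [id_eq] at h
      exact h.congr_deriv (by ring)
    · simp [hWa]
    · simp [hW'a]
    · intro u hu; have := hM u hu; linarith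
  -- lower bound near b
  set mb := deriv (deriv W) b / 2 with hmbdef
  have hmbpos : 0 < mb := by positivity
  have hmble : mb < deriv (deriv W) b := by rw [hmbdef]; linarith
  have hnb : deriv (deriv W) ⁻¹' Ioi mb ∈ nhds b :=
    hW2c.continuousAt.preimage_mem_nhds (Ioi_mem_nhds hmble)
  clear_value mb
  obtain ⟨ε, hε, hball⟩ := Metric.mem_nhds_iff.mp hnb
  set εb := min (ε/2) ((b-a)/4) with hεbdef
  clear_value εb
  have hεbpos : 0 < εb := by rw [hεbdef]; exact lt_min (by linarith) (by linarith)
  have hεble : εb ≤ (b-a)/4 := by rw [hεbdef]; exact min_le_right _ _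
  have hmemb : ∀ u ∈ Icc (b-εb) b, mb ≤ deriv (deriv W) u := by
    intro u hu
    have : u ∈ Metric.ball b ε := by
      rw [Metric.mem_ball, Real.dist_eq, abs_sub_lt_iff]
      constructor
      · linarith [hu.2]
      · have := hu.1
        have h1 : εb ≤ ε/2 := by rw [hεbdef]; exact min_le_left _ _
        linarith
    exact le_of_lt (hball this)
  have hlowb : ∀ u ∈ Icc (b-εb) b, 0 ≤ W u - mb/2*(b-u)^2 := by
    apply aux_right (f' := fun u => deriv W u + mb*(b-u))
      (f'' := fun u => deriv (deriv W) u - mb)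
    · intro u
      have h := (hWd u).hasDerivAt.sub (hasDerivAt_quadR (mb/2) b u)
      exact h.congr_deriv (by ring)
    · intro u
      have h := (hW1d u).hasDerivAt.add (((hasDerivAt_id u).const_sub b).const_mul mb)
      simp only [id_eq] at h
      exact h.congr_deriv (by ring)
    · simp [hWb]
    · simp [hW'b]
    · intro u hu; have := hmemb u hu; linarith
  -- lower bound near a
  set ma := deriv (deriv W) a / 2 with hmadef
  have hmapos : 0 < ma := by positivity
  have hmale : ma < deriv (deriv W) a := by rw [hmadef]; linarith
  have hna : deriv (deriv W) ⁻¹' Ioi ma ∈ nhds a :=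
    hW2c.continuousAt.preimage_mem_nhds (Ioi_mem_nhds hmale)
  clear_value ma
  obtain ⟨ε', hε', hball'⟩ := Metric.mem_nhds_iff.mp hna
  set εa := min (ε'/2) ((b-a)/4) with hεadef
  clear_value εa
  have hεapos : 0 < εa := by rw [hεadef]; exact lt_min (by linarith) (by linarith)
  have hεale : εa ≤ (b-a)/4 := by rw [hεadef]; exact min_le_right _ _
  have hmema : ∀ u ∈ Icc a (a+εa), ma ≤ deriv (deriv W) u := by
    intro u hu
    have : u ∈ Metric.ball a ε' := by
      rw [Metric.mem_ball, Real.dist_eq, abs_sub_lt_iff]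
      have h1 : εa ≤ ε'/2 := by rw [hεadef]; exact min_le_left _ _
      constructor
      · linarith [hu.2]
      · linarith [hu.1]
    exact le_of_lt (hball' this)
  have hlowa : ∀ u ∈ Icc a (a+εa), 0 ≤ W u - ma/2*(u-a)^2 := by
    apply aux_left (f' := fun u => deriv W u - ma*(u-a))
      (f'' := fun u => deriv (deriv W) u - ma)
    · intro u
      have h := (hWd u).hasDerivAt.sub (hasDerivAt_quadL (ma/2) a u)
      exact h.congr_deriv (by ring)
    · intro u
      have h := (hW1d u).hasDerivAt.sub (((hasDerivAt_id u).sub_const a).const_mul ma)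
      simp only [id_eq] at h
      exact h.congr_deriv (by ring)
    · simp [hWa]
    · simp [hW'a]
    · intro u hu; have := hmema u hu; linarith
  -- middle minimum
  have hne : (Icc (a+εa) (b-εb)).Nonempty := nonempty_Icc.2 (by linarith)
  obtain ⟨z, hz, hzmin⟩ := isCompact_Icc.exists_isMinOn hne
    (hWC2.continuous.continuousOn (s := Icc (a+εa) (b-εb)))
  set δ := W z with hδdef
  have hδpos : 0 < δ := hWpos z ⟨by linarith [hz.1], by linarith [hz.2]⟩
  have hδle0 : ∀ u ∈ Icc (a+εa) (b-εb), δ ≤ W u := fun u hu => (isMinOn_iff.mp hzmin) u hu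
  clear_value δ
  have hδle : ∀ u ∈ Icc (a+εa) (b-εb), δ ≤ W u := hδle0
  -- assemble the constants
  have hba : (0:ℝ) < b - a := by linarith
  refine ⟨M/2, by positivity,
    min (min (ma/(2*(b-a)^2)) (mb/(2*(b-a)^2))) (δ/(b-a)^4), by positivity, ?_⟩
  set c := min (min (ma/(2*(b-a)^2)) (mb/(2*(b-a)^2))) (δ/(b-a)^4) with hcdef
  have hcpos : 0 < c := by rw [hcdef]; positivity
  have hca : c ≤ ma/(2*(b-a)^2) := by rw [hcdef]; exact (min_le_left _ _).trans (min_le_left _ _)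
  have hcb : c ≤ mb/(2*(b-a)^2) := by rw [hcdef]; exact (min_le_left _ _).trans (min_le_right _ _)
  have hcd : c ≤ δ/(b-a)^4 := by rw [hcdef]; exact min_le_right _ _
  clear_value c
  intro u hu
  refine ⟨by linarith [hub1 u hu], by linarith [hub2 u hu], ?_⟩
  have hua : 0 ≤ u - a := by linarith [hu.1]
  have hbu : 0 ≤ b - u := by linarith [hu.2]
  rcases le_or_gt u (a+εa) with hcase1 | hcase1
  · -- near a
    have hW : ma/2*(u-a)^2 ≤ W u := by linarith [hlowa u ⟨hu.1, hcase1⟩]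
    have hc2 : c * (b-a)^2 ≤ ma/2 := by
      have hne2 : ((b-a)^2) ≠ 0 := by positivity
      calc c * (b-a)^2 ≤ ma/(2*(b-a)^2) * (b-a)^2 :=
            mul_le_mul_of_nonneg_right hca (sq_nonneg _)
        _ = ma/2 := by field_simp
    calc c*((u-a)*(b-u))^2 = (c*(b-u)^2)*(u-a)^2 := by ring
      _ ≤ (c*(b-a)^2)*(u-a)^2 := by
          apply mul_le_mul_of_nonneg_right _ (sq_nonneg _)
          apply mul_le_mul_of_nonneg_left _ hcpos.le
          nlinarith
      _ ≤ (ma/2)*(u-a)^2 := mul_le_mul_of_nonneg_right hc2 (sq_nonneg _)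
      _ ≤ W u := hW
  · rcases le_or_gt (b-εb) u with hcase2 | hcase2
    · -- near b
      have hW : mb/2*(b-u)^2 ≤ W u := by linarith [hlowb u ⟨hcase2, hu.2⟩]
      have hc2 : c * (b-a)^2 ≤ mb/2 := by
        have hne2 : ((b-a)^2) ≠ 0 := by positivity
        calc c * (b-a)^2 ≤ mb/(2*(b-a)^2) * (b-a)^2 :=
              mul_le_mul_of_nonneg_right hcb (sq_nonneg _)
          _ = mb/2 := by field_simp
      calc c*((u-a)*(b-u))^2 = (c*(u-a)^2)*(b-u)^2 := by ring
        _ ≤ (c*(b-a)^2)*(b-u)^2 := by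
            apply mul_le_mul_of_nonneg_right _ (sq_nonneg _)
            apply mul_le_mul_of_nonneg_left _ hcpos.le
            nlinarith
        _ ≤ (mb/2)*(b-u)^2 := mul_le_mul_of_nonneg_right hc2 (sq_nonneg _)
        _ ≤ W u := hW
    · -- middle
      have hW : δ ≤ W u := hδle u ⟨hcase1.le, hcase2.le⟩
      have h5 : (u-a)*(b-u) ≤ (b-a)*(b-a) :=
        mul_le_mul (by linarith) (by linarith) hbu (by linarith)
      have hX : ((u-a)*(b-u))^2 ≤ (b-a)^4 := by
        calc ((u-a)*(b-u))^2 ≤ ((b-a)*(b-a))^2 := pow_le_pow_left₀ (mul_nonneg hua hbu) h5 2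
          _ = (b-a)^4 := by ring
      have hd4 : (0:ℝ) < (b-a)^4 := by positivity
      calc c*((u-a)*(b-u))^2 ≤ (δ/(b-a)^4)*(b-a)^4 :=
            mul_le_mul hcd hX (sq_nonneg _) (by positivity)
        _ = δ := div_mul_cancel₀ δ (ne_of_gt hd4)
        _ ≤ W u := hW

set_option maxHeartbeats 1000000 in
/-- Exponential decay of the derivative of the optimal profile:
there is `C > 0` with `0 < q₀' s ≤ C e^{-|s|/C}` for all `s`. -/
theorem stmt6 (W : ℝ → ℝ) (a b : ℝ) (hab : a < b) (hWnn : ∀ u, 0 ≤ W u)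
    (hWC2 : ContDiff ℝ 2 W) (hWa : W a = 0) (hWb : W b = 0)
    (hWpos : ∀ u ∈ Set.Ioo a b, 0 < W u)
    (hW''a : 0 < iteratedDeriv 2 W a) (hW''b : 0 < iteratedDeriv 2 W b)
    (q₀ : ℝ → ℝ) (hq₀mem : ∀ s, q₀ s ∈ Set.Ioo a b)
    (hq₀ : ∀ s, HasDerivAt q₀ (Real.sqrt (W (q₀ s))) s)
    (hq₀0 : q₀ 0 = (a + b) / 2) :
    ∃ C > 0, ∀ s : ℝ,
      0 < deriv q₀ s ∧ deriv q₀ s ≤ C * Real.exp (-|s| / C) := by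
  obtain ⟨K, hK, c, hc, hbounds⟩ := quad_bounds W a b hab hWnn hWC2 hWa hWb hWpos hW''a hW''b
  have hderiv : ∀ s, deriv q₀ s = Real.sqrt (W (q₀ s)) := fun s => (hq₀ s).deriv
  have hmono : Monotone q₀ :=
    monotone_of_hasDerivAt_nonneg hq₀ (fun s => Real.sqrt_nonneg _)
  have hba : (0:ℝ) < b - a := by linarith
  have hsc : 0 < Real.sqrt c := Real.sqrt_pos.2 hc
  have hsK : 0 < Real.sqrt K := Real.sqrt_pos.2 hK
  set lam := Real.sqrt c * (b-a)/2 with hlamdef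
  have hlam : 0 < lam := by rw [hlamdef]; positivity
  -- sqrt bounds
  have hsqrt_low : ∀ u ∈ Icc a b, Real.sqrt c * ((u-a)*(b-u)) ≤ Real.sqrt (W u) := by
    intro u hu
    have h1 := (hbounds u hu).2.2
    have hX : 0 ≤ (u-a)*(b-u) := mul_nonneg (by linarith [hu.1]) (by linarith [hu.2])
    have := Real.sqrt_le_sqrt h1
    rwa [Real.sqrt_mul hc.le, Real.sqrt_sq hX] at this
  have hsqrt_ub1 : ∀ u ∈ Icc a b, Real.sqrt (W u) ≤ Real.sqrt K * (b-u) := by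
    intro u hu
    have := Real.sqrt_le_sqrt (hbounds u hu).1
    rwa [Real.sqrt_mul hK.le, Real.sqrt_sq (by linarith [hu.2])] at this
  have hsqrt_ub2 : ∀ u ∈ Icc a b, Real.sqrt (W u) ≤ Real.sqrt K * (u-a) := by
    intro u hu
    have := Real.sqrt_le_sqrt (hbounds u hu).2.1
    rwa [Real.sqrt_mul hK.le, Real.sqrt_sq (by linarith [hu.1])] at this
  have hmemIcc : ∀ s, q₀ s ∈ Icc a b := fun s => Set.Ioo_subset_Icc_self (hq₀mem s)
  -- exponential decay to the right
  have hg : ∀ s, HasDerivAt (fun s => (b - q₀ s) * Real.exp (lam * s))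
      (Real.exp (lam*s) * (lam*(b - q₀ s) - Real.sqrt (W (q₀ s)))) s := by
    intro s
    have he : HasDerivAt (fun x => Real.exp (lam*x)) (Real.exp (lam*s)*lam) s := by
      have := ((hasDerivAt_id s).const_mul lam).exp
      simpa using this
    have h := ((hq₀ s).const_sub b).mul he
    exact h.congr_deriv (by ring)
  have hganti : AntitoneOn (fun s => (b - q₀ s) * Real.exp (lam * s)) (Ici 0) := by
    apply antitoneOn_of_deriv_nonpos (convex_Ici 0)
      (fun s _ => (hg s).differentiableAt.continuousAt.continuousWithinAt)
      (fun s _ => (hg s).differentiableAt.differentiableWithinAt)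
    intro s hs
    rw [interior_Ici] at hs
    rw [(hg s).deriv]
    apply mul_nonpos_of_nonneg_of_nonpos (Real.exp_nonneg _)
    have hu := hq₀mem s
    have hmid : (a+b)/2 ≤ q₀ s := hq₀0 ▸ hmono (le_of_lt hs)
    have hlow := hsqrt_low (q₀ s) (hmemIcc s)
    have hbu : 0 ≤ b - q₀ s := by linarith [hu.2]
    have : lam * (b - q₀ s) ≤ Real.sqrt c * ((q₀ s - a)*(b - q₀ s)) := by
      rw [hlamdef]
      nlinarith [mul_nonneg (mul_nonneg hsc.le hbu)
        (show (0:ℝ) ≤ q₀ s - a - (b-a)/2 by linarith)]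
    linarith
  have hright : ∀ s : ℝ, 0 ≤ s → b - q₀ s ≤ (b-a)/2 * Real.exp (-(lam*s)) := by
    intro s hs
    have h := hganti Set.self_mem_Ici hs hs
    simp only [mul_zero, Real.exp_zero, mul_one, hq₀0] at h
    have h' := mul_le_mul_of_nonneg_right h (Real.exp_nonneg (-(lam*s)))
    rw [mul_assoc, ← Real.exp_add, add_neg_cancel, Real.exp_zero, mul_one] at h'
    calc b - q₀ s ≤ (b - (a+b)/2) * Real.exp (-(lam*s)) := h'
      _ = (b-a)/2 * Real.exp (-(lam*s)) := by ring
  -- exponential decay to the left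
  have hh : ∀ s, HasDerivAt (fun s => (q₀ s - a) * Real.exp (-(lam * s)))
      (Real.exp (-(lam*s)) * (Real.sqrt (W (q₀ s)) - lam*(q₀ s - a))) s := by
    intro s
    have he : HasDerivAt (fun x => Real.exp (-(lam*x))) (Real.exp (-(lam*s))*(-lam)) s := by
      have := (((hasDerivAt_id s).const_mul lam).neg).exp
      simpa using this
    have h := ((hq₀ s).sub_const a).mul he
    exact h.congr_deriv (by ring)
  have hhmono : MonotoneOn (fun s => (q₀ s - a) * Real.exp (-(lam * s))) (Iic 0) := by
    apply monotoneOn_of_deriv_nonneg (convex_Iic 0)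
      (fun s _ => (hh s).differentiableAt.continuousAt.continuousWithinAt)
      (fun s _ => (hh s).differentiableAt.differentiableWithinAt)
    intro s hs
    rw [interior_Iic] at hs
    rw [(hh s).deriv]
    apply mul_nonneg (Real.exp_nonneg _)
    have hu := hq₀mem s
    have hmid : q₀ s ≤ (a+b)/2 := hq₀0 ▸ hmono (le_of_lt hs)
    have hlow := hsqrt_low (q₀ s) (hmemIcc s)
    have hua : 0 ≤ q₀ s - a := by linarith [hu.1]
    have : lam * (q₀ s - a) ≤ Real.sqrt c * ((q₀ s - a)*(b - q₀ s)) := by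
      rw [hlamdef]
      nlinarith [mul_nonneg (mul_nonneg hsc.le hua)
        (show (0:ℝ) ≤ b - q₀ s - (b-a)/2 by linarith)]
    linarith
  have hleft : ∀ s : ℝ, s ≤ 0 → q₀ s - a ≤ (b-a)/2 * Real.exp (lam*s) := by
    intro s hs
    have h := hhmono (Set.mem_Iic.2 hs) Set.self_mem_Iic hs
    simp only [mul_zero, neg_zero, Real.exp_zero, mul_one, hq₀0] at h
    have h' := mul_le_mul_of_nonneg_right h (Real.exp_nonneg (lam*s))
    rw [mul_assoc, ← Real.exp_add, neg_add_cancel, Real.exp_zero, mul_one] at h'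
    calc q₀ s - a ≤ ((a+b)/2 - a) * Real.exp (lam*s) := h'
      _ = (b-a)/2 * Real.exp (lam*s) := by ring
  -- assemble
  set A := Real.sqrt K * ((b-a)/2) with hAdef
  have hApos : 0 < A := by rw [hAdef]; positivity
  refine ⟨max (1/lam) A, lt_max_of_lt_left (by positivity), ?_⟩
  set C := max (1/lam) A with hCdef
  have hCpos : 0 < C := lt_max_of_lt_left (by positivity)
  have hAC : A ≤ C := le_max_right _ _
  have hC1 : 1/C ≤ lam := by
    have h1 : 1/lam ≤ C := le_max_left _ _
    rw [div_le_iff₀ hCpos]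
    have h2 := (div_le_iff₀ hlam).mp h1
    linarith
  intro s
  constructor
  · rw [hderiv]
    exact Real.sqrt_pos.2 (hWpos _ (hq₀mem s))
  · have hkey : deriv q₀ s ≤ A * Real.exp (-(lam*|s|)) := by
      rcases le_total 0 s with hs | hs
      · rw [abs_of_nonneg hs, hderiv]
        calc Real.sqrt (W (q₀ s)) ≤ Real.sqrt K * (b - q₀ s) := hsqrt_ub1 _ (hmemIcc s)
          _ ≤ Real.sqrt K * ((b-a)/2 * Real.exp (-(lam*s))) :=
              mul_le_mul_of_nonneg_left (hright s hs) hsK.le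
          _ = A * Real.exp (-(lam*s)) := by rw [hAdef]; ring
      · rw [abs_of_nonpos hs, hderiv]
        calc Real.sqrt (W (q₀ s)) ≤ Real.sqrt K * (q₀ s - a) := hsqrt_ub2 _ (hmemIcc s)
          _ ≤ Real.sqrt K * ((b-a)/2 * Real.exp (lam*s)) :=
              mul_le_mul_of_nonneg_left (hleft s hs) hsK.le
          _ = A * Real.exp (-(lam*(-s))) := by rw [hAdef]; ring_nf
    calc deriv q₀ s ≤ A * Real.exp (-(lam*|s|)) := hkey
      _ ≤ C * Real.exp (-|s|/C) := by
          apply mul_le_mul hAC _ (Real.exp_nonneg _) hCpos.le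
          apply Real.exp_le_exp.2
          have h2 : |s|/C ≤ lam*|s| := by
            calc |s|/C = |s| * (1/C) := by ring
              _ ≤ |s| * lam := mul_le_mul_of_nonneg_left hC1 (abs_nonneg s)
              _ = lam * |s| := mul_comm _ _
          have h3 : -|s|/C = -(|s|/C) := by ring
          linarith [h3]
end

section
/- If q is a solution of q'(s) = √(W(q(s))) with q(s₀) = γ ∈ (a,b), where q₀ is the solution with q₀(0) = (a+b)/2 and q₀ : ℝ → (a,b) is bijective, then q(s) = q₀(s - s₀ + q₀⁻¹(γ)) for all s ∈ ℝ. -/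
open Set Metric Filter Topology

private lemma sqrtW_lip (W : ℝ → ℝ) (a b : ℝ) (hWnn : ∀ u, 0 ≤ W u)
    (hWpos : ∀ u ∈ Set.Ioo a b, 0 < W u)
    (hWlip : ∀ u ∈ Set.Ioo a b, ∃ ε > 0, ∃ K : NNReal,
      LipschitzOnWith K W (Metric.ball u ε ∩ Set.Ioo a b))
    {u : ℝ} (hu : u ∈ Set.Ioo a b) :
    ∃ ε > 0, ∃ K : NNReal,
      LipschitzOnWith K (fun x => Real.sqrt (W x)) (Metric.ball u ε) := by
  obtain ⟨ε₀, hε₀, K, hK⟩ := hWlip u hu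
  have hWu : 0 < W u := hWpos u hu
  have hnhds : ball u ε₀ ∩ Set.Ioo a b ∈ 𝓝 u :=
    Filter.inter_mem (Metric.ball_mem_nhds u hε₀) (isOpen_Ioo.mem_nhds hu)
  have hWcont : ContinuousAt W u := hK.continuousOn.continuousAt hnhds
  have h2 : ∀ᶠ x in 𝓝 u, W u / 2 < W x :=
    hWcont.eventually (eventually_gt_nhds (by linarith))
  have hmem : {x | W u / 2 < W x} ∩ (ball u ε₀ ∩ Set.Ioo a b) ∈ 𝓝 u :=
    Filter.inter_mem h2 hnhds
  obtain ⟨ε, hε, hball⟩ := Metric.mem_nhds_iff.mp hmem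
  set d : ℝ := Real.sqrt (W u / 2) with hd_def
  have hd : 0 < d := Real.sqrt_pos.mpr (by linarith)
  refine ⟨ε, hε, K * (Real.toNNReal (2 * d))⁻¹, ?_⟩
  rw [lipschitzOnWith_iff_dist_le_mul]
  intro x hx y hy
  have hx' := hball hx
  have hy' := hball hy
  have hxlb : d ≤ Real.sqrt (W x) := by
    apply Real.sqrt_le_sqrt; exact le_of_lt hx'.1
  have hylb : d ≤ Real.sqrt (W y) := by
    apply Real.sqrt_le_sqrt; exact le_of_lt hy'.1
  have hsum : 2 * d ≤ Real.sqrt (W x) + Real.sqrt (W y) := by linarith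
  have hkey : dist (Real.sqrt (W x)) (Real.sqrt (W y)) *
      (Real.sqrt (W x) + Real.sqrt (W y)) = dist (W x) (W y) := by
    rw [Real.dist_eq, Real.dist_eq, ← abs_of_nonneg
      (by positivity : (0:ℝ) ≤ Real.sqrt (W x) + Real.sqrt (W y)), ← abs_mul]
    congr 1
    have := Real.sq_sqrt (hWnn x)
    have := Real.sq_sqrt (hWnn y)
    nlinarith
  have hWdist : dist (W x) (W y) ≤ K * dist x y := by
    have := lipschitzOnWith_iff_dist_le_mul.mp hK
    exact this x ⟨hx'.2.1, hx'.2.2⟩ y ⟨hy'.2.1, hy'.2.2⟩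
  have h2d : (0:ℝ) < 2 * d := by linarith
  have hcoe : ((K * (Real.toNNReal (2 * d))⁻¹ : NNReal) : ℝ) = K / (2 * d) := by
    push_cast
    rw [Real.coe_toNNReal _ (le_of_lt h2d)]
    ring
  rw [hcoe, div_mul_eq_mul_div, le_div_iff₀ h2d]
  calc dist (Real.sqrt (W x)) (Real.sqrt (W y)) * (2 * d)
      ≤ dist (Real.sqrt (W x)) (Real.sqrt (W y)) *
        (Real.sqrt (W x) + Real.sqrt (W y)) := by
        apply mul_le_mul_of_nonneg_left hsum dist_nonneg
    _ = dist (W x) (W y) := hkey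
    _ ≤ K * dist x y := hWdist

/-- Solutions of `q' = √(W ∘ q)` with datum `q s₀ = γ ∈ (a,b)` are translations of
the optimal profile: `q s = q₀ (s - s₀ + q₀⁻¹ γ)` for all `s`. -/
theorem stmt7 (W : ℝ → ℝ) (a b : ℝ) (hab : a < b) (hWnn : ∀ u, 0 ≤ W u)
    (hWa : W a = 0) (hWb : W b = 0) (hWpos : ∀ u ∈ Set.Ioo a b, 0 < W u)
    (hWlip : ∀ u ∈ Set.Ioo a b, ∃ ε > 0, ∃ K : NNReal,
      LipschitzOnWith K W (Metric.ball u ε ∩ Set.Ioo a b))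
    (q₀ : ℝ → ℝ) (hq₀mem : ∀ s, q₀ s ∈ Set.Ioo a b)
    (hq₀mono : StrictMono q₀) (hq₀range : Set.range q₀ = Set.Ioo a b)
    (hq₀ : ∀ s, HasDerivAt q₀ (Real.sqrt (W (q₀ s))) s)
    (hq₀0 : q₀ 0 = (a + b) / 2)
    (q : ℝ → ℝ) (s₀ γ : ℝ) (hγ : γ ∈ Set.Ioo a b)
    (hqmem : ∀ s, q s ∈ Set.Ioo a b)
    (hq : ∀ s, HasDerivAt q (Real.sqrt (W (q s))) s) (hqs₀ : q s₀ = γ) :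
    ∀ s, q s = q₀ (s - s₀ + Function.invFun q₀ γ) := by
  set c := Function.invFun q₀ γ with hc_def
  have hγrange : γ ∈ Set.range q₀ := hq₀range ▸ hγ
  have hc : q₀ c = γ := Function.invFun_eq hγrange
  set r : ℝ → ℝ := fun s => q₀ (s - s₀ + c) with hr_def
  have hr : ∀ s, HasDerivAt r (Real.sqrt (W (r s))) s := by
    intro s
    have h1 : HasDerivAt (fun s : ℝ => s - s₀ + c) 1 s := by
      simpa using ((hasDerivAt_id s).sub_const s₀).add_const c
    have := (hq₀ (s - s₀ + c)).comp s h1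
    simpa [hr_def, Function.comp_def] using this
  have hrs₀ : r s₀ = q s₀ := by simp [hr_def, hc, hqs₀]
  have hrc : Continuous r :=
    continuous_iff_continuousAt.mpr fun s => (hr s).continuousAt
  have hqc : Continuous q :=
    continuous_iff_continuousAt.mpr fun s => (hq s).continuousAt
  set A : Set ℝ := {s | q s = r s} with hA_def
  have hAne : A.Nonempty := ⟨s₀, hrs₀.symm⟩
  have hAclosed : IsClosed A := isClosed_eq hqc hrc
  have hAopen : IsOpen A := by
    rw [isOpen_iff_mem_nhds]
    intro t ht
    have htu : q t ∈ Set.Ioo a b := hqmem t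
    obtain ⟨ε, hε, K, hlip⟩ := sqrtW_lip W a b hWnn hWpos hWlip htu
    have hqball : ∀ᶠ s in 𝓝 t, q s ∈ ball (q t) ε :=
      hqc.continuousAt.preimage_mem_nhds (Metric.ball_mem_nhds _ hε)
    have hrball : ∀ᶠ s in 𝓝 t, r s ∈ ball (q t) ε := by
      have : r t = q t := ht.symm
      exact hrc.continuousAt.preimage_mem_nhds (this ▸ Metric.ball_mem_nhds _ hε)
    have := ODE_solution_unique_of_eventually
      (v := fun _ x => Real.sqrt (W x)) (s := fun _ => ball (q t) ε)
      (Filter.Eventually.of_forall fun _ => hlip)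
      (hqball.mono fun s hs => ⟨hq s, hs⟩)
      (hrball.mono fun s hs => ⟨hr s, hs⟩)
      ht
    exact this.mono fun s hs => hs
  have : A = Set.univ := IsClopen.eq_univ ⟨hAclosed, hAopen⟩ hAne
  intro s
  have : s ∈ A := this ▸ Set.mem_univ s
  exact this
end

section
/- Let W : ℝ → [0,∞) be C² with consecutive zeros a < b, W > 0 on (a,b), W''(a) > 0 and W''(b) > 0, and let q₀ : ℝ → (a,b) be the optimal profile solving q₀' = √(W(q₀)). Then ∫_{-∞}^{+∞} (W'(q₀(s)))² ds = ∫_a^b (W'(ψ))²/√(W(ψ)) dψ, and this quantity is finite; in particular W'∘q₀ belongs to L²(ℝ). -/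
open MeasureTheory intervalIntegral


lemma aux_bound (W : ℝ → ℝ) (a : ℝ) (hC2 : ContDiff ℝ 2 W)
    (hWa : W a = 0) (hW'a : deriv W a = 0) (hW'' : 0 < deriv (deriv W) a) :
    ∃ δ > 0, ∃ M : ℝ, ∀ u ∈ Set.Ioc a (a + δ),
      (deriv W u) ^ 2 / Real.sqrt (W u) ≤ M := by
  set f := deriv (deriv W) with hf
  have hW1 : ContDiff ℝ 1 (deriv W) := (contDiff_succ_iff_deriv.mp (by exact_mod_cast hC2 : ContDiff ℝ (1+1) W)).2.2
  have hfc : Continuous f := hW1.continuous_deriv le_rfl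
  have hWd : ∀ x, HasDerivAt W (deriv W x) x :=
    fun x => (hC2.differentiable two_ne_zero).differentiableAt.hasDerivAt
  have hW'd : ∀ x, HasDerivAt (deriv W) (f x) x :=
    fun x => ((hW1.differentiable one_ne_zero) x).hasDerivAt
  set c := f a / 2 with hc
  have hcpos : 0 < c := by positivity
  -- find δ with |f t - f a| < c on the ball
  obtain ⟨δ, hδpos, hδ⟩ := Metric.continuousAt_iff.mp hfc.continuousAt c hcpos
  refine ⟨δ / 2, by positivity, ?_⟩
  have hfb : ∀ t ∈ Set.Icc a (a + δ/2), c ≤ f t ∧ f t ≤ 3 * c := by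
    intro t ht
    have : dist t a < δ := by
      rw [Real.dist_eq, abs_of_nonneg (by linarith [ht.1])]
      linarith [ht.2]
    have := hδ this
    rw [Real.dist_eq, abs_lt] at this
    constructor <;> [linarith [this.1]; linarith [this.2]]
  -- derivative bounds
  have hW'b : ∀ u ∈ Set.Icc a (a + δ/2),
      c * (u - a) ≤ deriv W u ∧ deriv W u ≤ 3 * c * (u - a) := by
    intro u hu
    have hint : ∫ t in a..u, f t = deriv W u - deriv W a :=
      intervalIntegral.integral_eq_sub_of_hasDerivAt
        (fun t _ => hW'd t) (hfc.intervalIntegrable a u)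
    have hsub : Set.Icc a u ⊆ Set.Icc a (a + δ/2) :=
      Set.Icc_subset_Icc le_rfl hu.2
    have h1 : ∫ t in a..u, (c : ℝ) ≤ ∫ t in a..u, f t := by
      apply intervalIntegral.integral_mono_on hu.1
        (intervalIntegrable_const) (hfc.intervalIntegrable a u)
      exact fun t ht => (hfb t (hsub ht)).1
    have h2 : ∫ t in a..u, f t ≤ ∫ t in a..u, (3 * c : ℝ) := by
      apply intervalIntegral.integral_mono_on hu.1
        (hfc.intervalIntegrable a u) intervalIntegrable_const
      exact fun t ht => (hfb t (hsub ht)).2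
    simp only [intervalIntegral.integral_const, smul_eq_mul] at h1 h2
    rw [hint, hW'a] at h1 h2
    constructor <;> nlinarith
  -- bound on W
  have hWb : ∀ u ∈ Set.Icc a (a + δ/2), c * (u - a) ^ 2 / 2 ≤ W u := by
    intro u hu
    have hint : ∫ t in a..u, deriv W t = W u - W a :=
      intervalIntegral.integral_eq_sub_of_hasDerivAt
        (fun t _ => hWd t) ((hW1.continuous).intervalIntegrable a u)
    have hsub : Set.Icc a u ⊆ Set.Icc a (a + δ/2) :=
      Set.Icc_subset_Icc le_rfl hu.2
    have h1 : ∫ t in a..u, c * (t - a) ≤ ∫ t in a..u, deriv W t := by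
      apply intervalIntegral.integral_mono_on hu.1
        ((continuous_const.mul (continuous_id.sub continuous_const)).intervalIntegrable a u)
        ((hW1.continuous).intervalIntegrable a u)
      exact fun t ht => (hW'b t (hsub ht)).1
    have h2 : ∫ t in a..u, c * (t - a) = c * (u - a)^2 / 2 := by
      have : ∫ t in a..u, c * (t - a) = c * ∫ t in a..u, (t - a) := by
        rw [intervalIntegral.integral_const_mul]
      rw [this, intervalIntegral.integral_comp_sub_right (fun t => t) a, integral_id]
      ring
    rw [hint, hWa, sub_zero] at h1
    linarith [h1, h2.symm.le]
  -- conclude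
  refine ⟨(3 * c)^2 / Real.sqrt (c / 2) * (δ / 2), ?_⟩
  intro u hu
  have hu' : u ∈ Set.Icc a (a + δ/2) := ⟨hu.1.le, hu.2⟩
  have hua : 0 < u - a := by linarith [hu.1]
  have hWpos : 0 < W u := lt_of_lt_of_le (by positivity) (hWb u hu')
  have hsq : Real.sqrt (c / 2) * (u - a) ≤ Real.sqrt (W u) := by
    have : Real.sqrt (c * (u - a)^2 / 2) ≤ Real.sqrt (W u) :=
      Real.sqrt_le_sqrt (hWb u hu')
    calc Real.sqrt (c / 2) * (u - a)
        = Real.sqrt (c / 2 * (u - a)^2) := by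
          rw [Real.sqrt_mul (by positivity), Real.sqrt_sq hua.le]
      _ ≤ Real.sqrt (W u) := by rw [show c / 2 * (u-a)^2 = c * (u-a)^2 / 2 by ring]; exact this
  have hnum : (deriv W u)^2 ≤ (3 * c)^2 * (u - a)^2 := by
    have h := hW'b u hu'
    nlinarith [h.1, h.2, hua]
  have hden : 0 < Real.sqrt (c / 2) * (u - a) := by positivity
  calc (deriv W u)^2 / Real.sqrt (W u)
      ≤ (3 * c)^2 * (u - a)^2 / (Real.sqrt (c / 2) * (u - a)) :=
        div_le_div₀ (by positivity) hnum hden hsq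
    _ = (3 * c)^2 / Real.sqrt (c / 2) * (u - a) := by
        field_simp
    _ ≤ (3 * c)^2 / Real.sqrt (c / 2) * (δ / 2) := by
        have : 0 ≤ (3 * c)^2 / Real.sqrt (c / 2) := by positivity
        nlinarith [hu'.2]

lemma aux_bound' (W : ℝ → ℝ) (b : ℝ) (hC2 : ContDiff ℝ 2 W)
    (hWb : W b = 0) (hW'b : deriv W b = 0) (hW'' : 0 < deriv (deriv W) b) :
    ∃ δ > 0, ∃ M : ℝ, ∀ u ∈ Set.Ico (b - δ) b,
      (deriv W u) ^ 2 / Real.sqrt (W u) ≤ M := by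
  set V : ℝ → ℝ := fun x => W (2 * b - x) with hV
  have hrefl : ContDiff ℝ 2 (fun x : ℝ => 2 * b - x) := contDiff_const.sub contDiff_id
  have hVC2 : ContDiff ℝ 2 V := hC2.comp hrefl
  have hWd : ∀ x, HasDerivAt W (deriv W x) x :=
    fun x => (hC2.differentiable two_ne_zero).differentiableAt.hasDerivAt
  have hW1 : ContDiff ℝ 1 (deriv W) :=
    (contDiff_succ_iff_deriv.mp (by exact_mod_cast hC2 : ContDiff ℝ (1+1) W)).2.2
  have hW'd : ∀ x, HasDerivAt (deriv W) (deriv (deriv W) x) x :=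
    fun x => ((hW1.differentiable one_ne_zero) x).hasDerivAt
  have hreflD : ∀ x : ℝ, HasDerivAt (fun x : ℝ => 2 * b - x) (-1) x := by
    intro x
    simpa using (hasDerivAt_id x).const_sub (2 * b)
  have hVd : ∀ x, HasDerivAt V (-(deriv W (2 * b - x))) x := by
    intro x
    have h := (hWd (2 * b - x)).comp x (hreflD x)
    rw [mul_neg_one] at h
    exact h
  have hVderiv : deriv V = fun x => -(deriv W (2 * b - x)) :=
    funext fun x => (hVd x).deriv
  have hV'd : ∀ x, HasDerivAt (deriv V) (deriv (deriv W) (2 * b - x)) x := by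
    intro x
    rw [hVderiv]
    have h := ((hW'd (2 * b - x)).comp x (hreflD x)).neg
    rw [mul_neg_one, neg_neg] at h
    exact h
  have h1 : V b = 0 := by simp [hV, show 2 * b - b = b by ring, hWb]
  have h2 : deriv V b = 0 := by
    rw [hVderiv]; simp [show 2 * b - b = b by ring, hW'b]
  have h3 : 0 < deriv (deriv V) b := by
    rw [(hV'd b).deriv, show 2 * b - b = b by ring]; exact hW''
  obtain ⟨δ, hδ, M, hM⟩ := aux_bound V b hVC2 h1 h2 h3
  refine ⟨δ, hδ, M, fun u hu => ?_⟩
  have hv : 2 * b - u ∈ Set.Ioc b (b + δ) := by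
    constructor <;> [linarith [hu.2]; linarith [hu.1]]
  have := hM (2 * b - u) hv
  rw [(hVd (2 * b - u)).deriv] at this
  simpa [hV, show 2 * b - (2 * b - u) = u by ring] using this


/-- `∫ℝ (W'(q₀ s))² ds = ∫_a^b (W' ψ)²/√(W ψ) dψ`, this quantity is finite,
and in particular `W' ∘ q₀ ∈ L²(ℝ)`. -/
theorem stmt9 (W : ℝ → ℝ) (a b : ℝ) (hab : a < b) (hWnn : ∀ u, 0 ≤ W u)
    (hWC2 : ContDiff ℝ 2 W) (hWa : W a = 0) (hWb : W b = 0)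
    (hWpos : ∀ u ∈ Set.Ioo a b, 0 < W u)
    (hW''a : 0 < iteratedDeriv 2 W a) (hW''b : 0 < iteratedDeriv 2 W b)
    (q₀ : ℝ → ℝ) (hq₀mem : ∀ s, q₀ s ∈ Set.Ioo a b)
    (hq₀mono : StrictMono q₀) (hq₀range : Set.range q₀ = Set.Ioo a b)
    (hq₀ : ∀ s, HasDerivAt q₀ (Real.sqrt (W (q₀ s))) s) :
    (∫ s : ℝ, (deriv W (q₀ s)) ^ 2 = ∫ ψ in a..b, (deriv W ψ) ^ 2 / Real.sqrt (W ψ)) ∧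
    IntervalIntegrable (fun ψ => (deriv W ψ) ^ 2 / Real.sqrt (W ψ)) volume a b ∧
    MemLp (fun s => deriv W (q₀ s)) 2 (volume : Measure ℝ) := by
  set g : ℝ → ℝ := fun ψ => (deriv W ψ) ^ 2 / Real.sqrt (W ψ) with hg
  have hW1 : ContDiff ℝ 1 (deriv W) :=
    (contDiff_succ_iff_deriv.mp (by exact_mod_cast hWC2 : ContDiff ℝ (1+1) W)).2.2
  have hit : iteratedDeriv 2 W = deriv (deriv W) := by
    rw [iteratedDeriv_succ, iteratedDeriv_one]
  have hW'a : deriv W a = 0 := by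
    have : IsLocalMin W a := Filter.Eventually.of_forall (fun x => by rw [hWa]; exact hWnn x)
    exact this.deriv_eq_zero
  have hW'b : deriv W b = 0 := by
    have : IsLocalMin W b := Filter.Eventually.of_forall (fun x => by rw [hWb]; exact hWnn x)
    exact this.deriv_eq_zero
  -- global bound on g on Ioo a b
  obtain ⟨δ₁, hδ₁, M₁, hM₁⟩ := aux_bound W a hWC2 hWa hW'a (hit ▸ hW''a)
  obtain ⟨δ₂, hδ₂, M₂, hM₂⟩ := aux_bound' W b hWC2 hWb hW'b (hit ▸ hW''b)
  set K : Set ℝ := Set.Icc (a + δ₁) (b - δ₂) with hK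
  have hKsub : K ⊆ Set.Ioo a b := fun x hx => ⟨by linarith [hx.1], by linarith [hx.2]⟩
  have hgK : ContinuousOn g K := by
    apply ContinuousOn.div
    · exact ((hW1.continuous).pow 2).continuousOn
    · exact (Real.continuous_sqrt.comp (hWC2.continuous)).continuousOn
    · intro x hx
      exact (Real.sqrt_pos.mpr (hWpos x (hKsub hx))).ne'
  obtain ⟨M₃, hM₃⟩ := (isCompact_Icc).exists_bound_of_continuousOn hgK
  set M : ℝ := max M₁ (max M₂ M₃) with hM
  have hgnn : ∀ u, 0 ≤ g u := fun u => div_nonneg (sq_nonneg _) (Real.sqrt_nonneg _)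
  have hbound : ∀ u ∈ Set.Ioo a b, |g u| ≤ M := by
    intro u hu
    rw [abs_of_nonneg (hgnn u)]
    rcases le_or_gt u (a + δ₁) with h | h
    · exact le_trans (hM₁ u ⟨hu.1, h⟩) (le_max_left _ _)
    rcases le_or_gt (b - δ₂) u with h' | h'
    · exact le_trans (hM₂ u ⟨h', hu.2⟩) (le_trans (le_max_left _ _) (le_max_right _ _))
    · have := hM₃ u ⟨h.le, h'.le⟩
      rw [Real.norm_eq_abs, abs_of_nonneg (hgnn u)] at this
      exact le_trans this (le_trans (le_max_right _ _) (le_max_right _ _))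
  have hgmeas : AEStronglyMeasurable g volume := by
    apply Measurable.aestronglyMeasurable
    exact (((hW1.continuous).pow 2).measurable).div
      ((Real.continuous_sqrt.comp (hWC2.continuous)).measurable)
  have hg_int : IntegrableOn g (Set.Ioo a b) volume := by
    apply Measure.integrableOn_of_bounded (M := M)
    · exact ((measure_Ioo_lt_top).ne)
    · exact hgmeas
    · exact (ae_restrict_iff' measurableSet_Ioo).2 (ae_of_all _ hbound)
  -- change of variables
  have hderivW : ∀ x ∈ (Set.univ : Set ℝ),
      HasDerivWithinAt q₀ (Real.sqrt (W (q₀ x))) Set.univ x :=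
    fun x _ => (hq₀ x).hasDerivWithinAt
  have hinj : Set.InjOn q₀ Set.univ := hq₀mono.injective.injOn
  have hfun : (fun x => |Real.sqrt (W (q₀ x))| • g (q₀ x))
      = fun s => (deriv W (q₀ s)) ^ 2 := by
    funext x
    have hpos : 0 < Real.sqrt (W (q₀ x)) := Real.sqrt_pos.mpr (hWpos _ (hq₀mem x))
    rw [abs_of_nonneg hpos.le, smul_eq_mul, hg, mul_div_cancel₀ _ hpos.ne']
  have key := integral_image_eq_integral_abs_deriv_smul MeasurableSet.univ hderivW hinj g
  rw [Set.image_univ, hq₀range, Measure.restrict_univ, hfun] at key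
  have hIoo : ∫ x in Set.Ioo a b, g x = ∫ ψ in a..b, g ψ := by
    rw [intervalIntegral.integral_of_le hab.le, integral_Ioc_eq_integral_Ioo]
  have hint : Integrable (fun s => (deriv W (q₀ s)) ^ 2) volume := by
    have h := (integrableOn_image_iff_integrableOn_abs_deriv_smul
      MeasurableSet.univ hderivW hinj g)
    rw [Set.image_univ, hq₀range, hfun] at h
    have := h.mp hg_int
    rwa [integrableOn_univ] at this
  have hq₀cont : Continuous q₀ :=
    continuous_iff_continuousAt.2 fun s => (hq₀ s).continuousAt
  refine ⟨key.symm.trans hIoo, ?_, ?_⟩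
  · rw [intervalIntegrable_iff_integrableOn_Ioo_of_le hab.le]
    exact hg_int
  · exact (memLp_two_iff_integrable_sq
      (((hW1.continuous).comp hq₀cont).aestronglyMeasurable)).2 hint
end

section
/- Let W : ℝ → [0,∞) be C² with W(a) = W(b) = 0 and W > 0 on (a,b), and let q₀ be the optimal profile (strictly increasing solution of q' = √(W(q)) with q₀(0) = (a+b)/2). Suppose ψ : ℝ → ℝ is continuous, C¹ on the open set Ω = {s : W(ψ(s)) > 0}, satisfies ψ'(s)² = W(ψ(s)) for every s ∈ Ω, and ψ(0) = γ ∈ (a,b). Then either ψ(s) = q₀(s + q₀⁻¹(γ)) for all s, or ψ(s) = q₀(-s + q₀⁻¹(γ)) for all s. -/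
open Set

/-- Key lemma: the positive-sign case. -/
lemma stmt12_key (W : ℝ → ℝ) (a b : ℝ) (hWcont : Continuous W)
    (hWa : W a = 0) (hWb : W b = 0)
    (hWpos : ∀ u ∈ Set.Ioo a b, 0 < W u)
    (q₀ : ℝ → ℝ) (hq₀mono : StrictMono q₀) (hq₀range : Set.range q₀ = Set.Ioo a b)
    (hq₀ : ∀ s, HasDerivAt q₀ (Real.sqrt (W (q₀ s))) s)
    (ψ : ℝ → ℝ) (hψc : Continuous ψ)
    (hψdiff : ∀ s ∈ {s : ℝ | 0 < W (ψ s)}, DifferentiableAt ℝ ψ s)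
    (hψC1 : ContinuousOn (deriv ψ) {s : ℝ | 0 < W (ψ s)})
    (hψode : ∀ s ∈ {s : ℝ | 0 < W (ψ s)}, (deriv ψ s) ^ 2 = W (ψ s))
    (γ : ℝ) (hγ : γ ∈ Set.Ioo a b) (hψ0 : ψ 0 = γ)
    (hd0 : 0 < deriv ψ 0) :
    ∀ s, ψ s = q₀ (s + Function.invFun q₀ γ) := by
  have hq₀diff : Differentiable ℝ q₀ := fun s => (hq₀ s).differentiableAt
  have hq₀cont : Continuous q₀ := hq₀diff.continuous
  set Ω : Set ℝ := {s : ℝ | 0 < W (ψ s)} with hΩdef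
  have hΩopen : IsOpen Ω := isOpen_lt continuous_const (hWcont.comp hψc)
  have h0Ω : (0:ℝ) ∈ Ω := by simp only [hΩdef, mem_setOf_eq, hψ0]; exact hWpos γ hγ
  set I : Set ℝ := connectedComponentIn Ω 0 with hIdef
  have hIopen : IsOpen I := hΩopen.connectedComponentIn
  have hIpre : IsPreconnected I := isPreconnected_connectedComponentIn
  have hIΩ : I ⊆ Ω := connectedComponentIn_subset _ _
  have h0I : (0:ℝ) ∈ I := mem_connectedComponentIn h0Ω
  have hIconv : Convex ℝ I := convex_iff_ordConnected.mpr hIpre.ordConnected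
  -- ψ maps I into (a,b)
  have hmap : ∀ s ∈ I, ψ s ∈ Set.Ioo a b := by
    intro s hs
    have himg : IsPreconnected (ψ '' I) := hIpre.image ψ hψc.continuousOn
    have hOC : (ψ '' I).OrdConnected := isPreconnected_iff_ordConnected.mp himg
    have hγmem : γ ∈ ψ '' I := ⟨0, h0I, hψ0⟩
    have hψs : ψ s ∈ ψ '' I := ⟨s, hs, rfl⟩
    have hW : ∀ u ∈ ψ '' I, 0 < W u := by
      rintro u ⟨t, ht, rfl⟩; exact hIΩ ht
    constructor
    · by_contra h
      push_neg at h
      have ha : a ∈ ψ '' I := hOC.out hψs hγmem ⟨h, le_of_lt hγ.1⟩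
      have := hW a ha
      rw [hWa] at this; exact lt_irrefl 0 this
    · by_contra h
      push_neg at h
      have hb : b ∈ ψ '' I := hOC.out hγmem hψs ⟨le_of_lt hγ.2, h⟩
      have := hW b hb
      rw [hWb] at this; exact lt_irrefl 0 this
  -- derivative positive on I
  have hpos : ∀ s ∈ I, 0 < deriv ψ s := by
    intro s hs
    rcases lt_trichotomy (deriv ψ s) 0 with h | h | h
    · exfalso
      have hIVT := hIpre.intermediate_value hs h0I (hψC1.mono hIΩ)
      have h0mem : (0:ℝ) ∈ Icc (deriv ψ s) (deriv ψ 0) := ⟨le_of_lt h, le_of_lt hd0⟩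
      obtain ⟨t, htI, ht⟩ := hIVT h0mem
      have h1 := hψode t (hIΩ htI)
      have h2 := hIΩ htI
      simp only [hΩdef, mem_setOf_eq] at h2
      rw [ht] at h1
      nlinarith
    · exfalso
      have hpos' := hIΩ hs
      simp only [hΩdef, mem_setOf_eq] at hpos'
      nlinarith [hψode s (hIΩ hs)]
    · exact h
  have hderiv_eq : ∀ s ∈ I, deriv ψ s = Real.sqrt (W (ψ s)) := by
    intro s hs
    have h1 := hψode s (hIΩ hs)
    rw [← h1, Real.sqrt_sq (le_of_lt (hpos s hs))]
  -- the inverse of q₀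
  set G : ℝ → ℝ := Function.invFun q₀ with hGdef
  have hGq : ∀ s, G (q₀ s) = s := fun s => Function.leftInverse_invFun hq₀mono.injective s
  have hqG : ∀ u ∈ Set.Ioo a b, q₀ (G u) = u := by
    intro u hu
    exact Function.invFun_eq (by rw [← hq₀range] at hu; exact hu)
  have hGmono : MonotoneOn G (Set.Ioo a b) := by
    intro x hx y hy hxy
    by_contra h
    push_neg at h
    have := hq₀mono h
    rw [hqG x hx, hqG y hy] at this
    exact absurd hxy (not_le_of_gt this)
  have hGimg : G '' Set.Ioo a b = Set.univ := by
    apply Set.eq_univ_of_forall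
    intro s
    exact ⟨q₀ s, by rw [← hq₀range]; exact Set.mem_range_self s, hGq s⟩
  have hGcont : ∀ u ∈ Set.Ioo a b, ContinuousAt G u := by
    intro u hu
    exact continuousAt_of_monotoneOn_of_image_mem_nhds hGmono (isOpen_Ioo.mem_nhds hu)
      (by rw [hGimg]; exact Filter.univ_mem)
  have hGderiv : ∀ u ∈ Set.Ioo a b, HasDerivAt G (Real.sqrt (W u))⁻¹ u := by
    intro u hu
    have h1 : HasDerivAt q₀ (Real.sqrt (W (q₀ (G u)))) (G u) := hq₀ _
    rw [hqG u hu] at h1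
    exact HasDerivAt.of_local_left_inverse (hGcont u hu) h1
      (ne_of_gt (Real.sqrt_pos.mpr (hWpos u hu)))
      (Filter.eventually_of_mem (isOpen_Ioo.mem_nhds hu) (fun x hx => hqG x hx))
  -- F has derivative zero on I
  set F : ℝ → ℝ := fun s => G (ψ s) - s with hFdef
  have hF : ∀ s ∈ I, HasDerivAt F 0 s := by
    intro s hs
    have hd : HasDerivAt ψ (deriv ψ s) s := (hψdiff s (hIΩ hs)).hasDerivAt
    have hcomp : HasDerivAt (fun t => G (ψ t))
        ((Real.sqrt (W (ψ s)))⁻¹ * deriv ψ s) s :=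
      (hGderiv (ψ s) (hmap s hs)).comp s hd
    have h1 : (Real.sqrt (W (ψ s)))⁻¹ * deriv ψ s = 1 := by
      rw [hderiv_eq s hs]
      exact inv_mul_cancel₀ (ne_of_gt (Real.sqrt_pos.mpr (hIΩ hs)))
    rw [h1] at hcomp
    have := hcomp.sub (hasDerivAt_id s)
    simp only [sub_self] at this; exact this
  -- F is constant on I
  have hFconst : ∀ s ∈ I, F s = F 0 := by
    intro s hs
    apply hIconv.is_const_of_fderivWithin_eq_zero
      (fun x hx => ((hF x hx).differentiableAt).differentiableWithinAt)
      ?_ hs h0I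
    intro x hx
    rw [fderivWithin_of_isOpen hIopen hx]
    have h0 : HasFDerivAt F (0 : ℝ →L[ℝ] ℝ) x := by
      have h := (hF x hx).hasFDerivAt
      convert h using 1
      ext
      simp
      ext; simp
    exact h0.fderiv
  have hIeq : ∀ s ∈ I, ψ s = q₀ (s + Function.invFun q₀ γ) := by
    intro s hs
    have h1 := hFconst s hs
    simp only [hFdef, hψ0, sub_zero] at h1
    have h2 : G (ψ s) = s + G γ := by linarith
    have h3 : q₀ (G (ψ s)) = ψ s := hqG _ (hmap s hs)
    rw [← h3, h2]
  -- I is all of ℝ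
  have hclosed : closure I ⊆ I := by
    intro s hs_cl
    have hEq : Set.EqOn ψ (fun t => q₀ (t + Function.invFun q₀ γ)) (closure I) :=
      Set.EqOn.closure (fun t ht => hIeq t ht) hψc
        (hq₀cont.comp (continuous_id.add continuous_const))
    have heq : ψ s = q₀ (s + Function.invFun q₀ γ) := hEq hs_cl
    have hmem : ψ s ∈ Set.Ioo a b := by
      rw [heq, ← hq₀range]; exact Set.mem_range_self _
    have hsΩ : s ∈ Ω := by
      simp only [hΩdef, mem_setOf_eq]; exact hWpos _ hmem
    have hins : insert s I ⊆ connectedComponentIn Ω 0 := by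
      apply IsPreconnected.subset_connectedComponentIn
        (hIpre.subset_closure (Set.subset_insert s I)
          (Set.insert_subset_iff.mpr ⟨hs_cl, subset_closure⟩))
        (Set.mem_insert_of_mem s h0I)
      exact Set.insert_subset_iff.mpr ⟨hsΩ, hIΩ⟩
    exact hins (Set.mem_insert s I)
  have hIuniv : I = Set.univ :=
    IsClopen.eq_univ ⟨isClosed_of_closure_subset hclosed, hIopen⟩ ⟨0, h0I⟩
  intro s
  exact hIeq s (hIuniv ▸ Set.mem_univ s)

/-- Characterization lemma: if `ψ` is continuous, `C¹` on `Ω = {W(ψ) > 0}` with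
`(ψ')² = W ∘ ψ` there, and `ψ 0 = γ ∈ (a,b)`, then `ψ` is a (possibly reflected)
translation of the optimal profile. -/
theorem stmt12 (W : ℝ → ℝ) (a b : ℝ) (hab : a < b) (hWnn : ∀ u, 0 ≤ W u)
    (hWC2 : ContDiff ℝ 2 W) (hWa : W a = 0) (hWb : W b = 0)
    (hWpos : ∀ u ∈ Set.Ioo a b, 0 < W u)
    (q₀ : ℝ → ℝ) (hq₀mem : ∀ s, q₀ s ∈ Set.Ioo a b)
    (hq₀mono : StrictMono q₀) (hq₀range : Set.range q₀ = Set.Ioo a b)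
    (hq₀ : ∀ s, HasDerivAt q₀ (Real.sqrt (W (q₀ s))) s)
    (hq₀0 : q₀ 0 = (a + b) / 2)
    (ψ : ℝ → ℝ) (hψc : Continuous ψ)
    (hψdiff : ∀ s ∈ {s : ℝ | 0 < W (ψ s)}, DifferentiableAt ℝ ψ s)
    (hψC1 : ContinuousOn (deriv ψ) {s : ℝ | 0 < W (ψ s)})
    (hψode : ∀ s ∈ {s : ℝ | 0 < W (ψ s)}, (deriv ψ s) ^ 2 = W (ψ s))
    (γ : ℝ) (hγ : γ ∈ Set.Ioo a b) (hψ0 : ψ 0 = γ) :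
    (∀ s, ψ s = q₀ (s + Function.invFun q₀ γ)) ∨
    (∀ s, ψ s = q₀ (-s + Function.invFun q₀ γ)) := by
  have hWcont : Continuous W := hWC2.continuous
  have h0Ω : (0:ℝ) ∈ {s : ℝ | 0 < W (ψ s)} := by
    simp only [Set.mem_setOf_eq, hψ0]; exact hWpos γ hγ
  have hd0sq : (deriv ψ 0) ^ 2 = W γ := by
    have := hψode 0 h0Ω; rwa [hψ0] at this
  have hd0ne : deriv ψ 0 ≠ 0 := by
    intro h
    rw [h] at hd0sq
    have := hWpos γ hγ
    simp at hd0sq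
    linarith [hWpos γ hγ, hd0sq]
  rcases hd0ne.lt_or_gt with hneg | hpos
  · right
    set φ : ℝ → ℝ := fun s => ψ (-s) with hφdef
    have hderφ : ∀ s, deriv φ s = -deriv ψ (-s) := fun s => deriv_comp_neg ψ s
    have hφc : Continuous φ := hψc.comp continuous_neg
    have key := stmt12_key W a b hWcont hWa hWb hWpos q₀ hq₀mono hq₀range hq₀ φ hφc
      (by
        intro s hs
        simp only [Set.mem_setOf_eq, hφdef] at hs
        exact (hψdiff (-s) hs).comp s (differentiable_neg _))
      (by
        have : deriv φ = fun s => -deriv ψ (-s) := funext hderφ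
        rw [this]
        apply ContinuousOn.neg
        exact hψC1.comp continuous_neg.continuousOn (fun x hx => hx))
      (by
        intro s hs
        simp only [Set.mem_setOf_eq, hφdef] at hs ⊢
        rw [hderφ s, neg_pow]
        simpa using hψode (-s) hs)
      γ hγ (by simp [hφdef, hψ0])
      (by rw [hderφ 0, neg_zero]; linarith)
    intro s
    have := key (-s)
    simpa [hφdef] using this
  · left
    exact stmt12_key W a b hWcont hWa hWb hWpos q₀ hq₀mono hq₀range hq₀ ψ hψc
      hψdiff hψC1 hψode γ hγ hψ0 hpos
end

section
/- Let q₀ be the optimal profile with exponentially decaying derivative (i.e. there is C > 0 with 0 < q₀'(s) ≤ C e^{-|s|/C}), let σ = 2∫_a^b √W = 2∫_{-∞}^{∞} (q₀')² ds, let Σ ⊂ ℝⁿ be a compact C^∞ hypersurface, and let H : Σ → ℝ be continuous. Define, for η ∈ C¹(ℝ²), F(η) = ∫_{-∞}^{∞} ∫_Σ [∂_s η(H(y),s) + 2 q₀'(s)² H(y)]² dℋ^{n-1}(y) ds. Then inf { F(η) : η ∈ C²_c(ℝ²) } = 0. -/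
open MeasureTheory

open MeasureTheory Real Set Metric Function
open scoped Convolution Pointwise


lemma integrable_exp_neg_abs {b : ℝ} (hb : 0 < b) :
    Integrable fun x : ℝ => Real.exp (-b * |x|) := by
  have hIoi : IntegrableOn (fun x : ℝ => Real.exp (-b * |x|)) (Ioi 0) := by
    refine (exp_neg_integrableOn_Ioi 0 hb).congr_fun (fun x hx => ?_) measurableSet_Ioi
    rw [abs_of_pos hx]
  rw [← integrableOn_univ, ← @Iio_union_Ici _ _ (0 : ℝ), integrableOn_union,
    integrableOn_Ici_iff_integrableOn_Ioi]
  refine ⟨?_, hIoi⟩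
  rw [← (Measure.measurePreserving_neg (volume : Measure ℝ)).integrableOn_comp_preimage
      (Homeomorph.neg ℝ).measurableEmbedding]
  simp only [Function.comp_def, abs_neg, neg_preimage, neg_Iio, neg_neg, neg_zero]
  exact hIoi


lemma sq_int_le_of_eLpNorm {f : ℝ → ℝ} (hf : MemLp f 2 volume) {ε : ℝ} (hε : 0 ≤ ε)
    (h : eLpNorm f 2 volume ≤ ENNReal.ofReal ε) : ∫ s, (f s) ^ 2 ≤ ε ^ 2 := by
  rw [hf.eLpNorm_eq_integral_rpow_norm two_ne_zero ENNReal.ofNat_ne_top] at h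
  have h2 : ENNReal.toReal 2 = 2 := by norm_num
  rw [h2] at h
  have hXnn : 0 ≤ ∫ a, ‖f a‖ ^ (2:ℝ) := by
    positivity
  have hA : (∫ a, ‖f a‖ ^ (2:ℝ)) ^ (2:ℝ)⁻¹ ≤ ε := by
    have := (ENNReal.ofReal_le_ofReal_iff hε).1 h
    exact this
  have hX : (∫ a, ‖f a‖ ^ (2:ℝ)) ≤ ε ^ 2 := by
    have key : (∫ a, ‖f a‖ ^ (2:ℝ)) = ((∫ a, ‖f a‖ ^ (2:ℝ)) ^ (2:ℝ)⁻¹) ^ (2:ℕ) := by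
      rw [← Real.rpow_natCast ((∫ a, ‖f a‖ ^ (2:ℝ)) ^ (2:ℝ)⁻¹) 2, ← Real.rpow_mul hXnn]
      norm_num
    rw [key]
    exact pow_le_pow_left₀ (Real.rpow_nonneg hXnn _) hA 2
  calc ∫ s, (f s) ^ 2 = ∫ a, ‖f a‖ ^ (2:ℝ) := by
        congr 1; funext a
        rw [show ((2:ℝ)) = ((2:ℕ):ℝ) by norm_num, Real.rpow_natCast, Real.norm_eq_abs, sq_abs]
    _ ≤ ε ^ 2 := hX

lemma smooth_L2_approx (g : ℝ → ℝ) (hg : MemLp g 2 volume) {δ : ℝ} (hδ : 0 < δ) :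
    ∃ ψ : ℝ → ℝ, ContDiff ℝ 2 ψ ∧ HasCompactSupport ψ ∧
      ∫ s, (ψ s - g s) ^ 2 ≤ δ := by
  -- step 1: continuous compactly supported approximation
  have hε1 : (ENNReal.ofReal (Real.sqrt (δ / 4))) ≠ 0 := by
    simp only [ne_eq, ENNReal.ofReal_eq_zero, not_le]
    positivity
  obtain ⟨u, hu_supp, hu_close, hu_cont, hu_mem⟩ :=
    hg.exists_hasCompactSupport_eLpNorm_sub_le ENNReal.ofNat_ne_top (f := g) hε1
  have hug : ∫ s, (u s - g s) ^ 2 ≤ δ / 4 := by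
    have h1 : ∫ s, (g s - u s) ^ 2 ≤ (Real.sqrt (δ / 4)) ^ 2 :=
      sq_int_le_of_eLpNorm (hg.sub hu_mem) (Real.sqrt_nonneg _) hu_close
    rw [Real.sq_sqrt (by positivity)] at h1
    calc ∫ s, (u s - g s) ^ 2 = ∫ s, (g s - u s) ^ 2 := by
          congr 1; funext s; ring
      _ ≤ δ / 4 := h1
  -- support bound for u
  obtain ⟨R₀, hR₀⟩ := hu_supp.isBounded.subset_closedBall 0
  set R : ℝ := max R₀ 0 with hRdef
  have hR : tsupport u ⊆ closedBall 0 R :=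
    hR₀.trans (closedBall_subset_closedBall (le_max_left _ _))
  have hR0 : 0 ≤ R := le_max_right _ _
  set T : ℝ := (volume (closedBall (0:ℝ) (R + 1))).toReal with hT
  have hTnn : 0 ≤ T := ENNReal.toReal_nonneg
  set ε₂ : ℝ := Real.sqrt (δ / (4 * (T + 1))) with hε₂def
  have hε₂pos : 0 < ε₂ := Real.sqrt_pos.2 (by positivity)
  -- uniform continuity modulus
  have huc : UniformContinuous u := hu_supp.uniformContinuous_of_continuous hu_cont
  obtain ⟨r, hrpos, hr⟩ := Metric.uniformContinuous_iff.1 huc ε₂ hε₂pos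
  set r' : ℝ := min r 1 with hr'def
  have hr'pos : 0 < r' := lt_min hrpos one_pos
  set φb : ContDiffBump (0:ℝ) := ⟨r' / 2, r', by positivity, by linarith⟩ with hφb
  set ψ : ℝ → ℝ := (φb.normed volume) ⋆[ContinuousLinearMap.lsmul ℝ ℝ, volume] u with hψ
  have hu_li : LocallyIntegrable u volume := hu_cont.locallyIntegrable
  have hψ_smooth : ContDiff ℝ 2 ψ :=
    HasCompactSupport.contDiff_convolution_left _ φb.hasCompactSupport_normed
      (φb.contDiff_normed (n := 2)) hu_li
  have hψ_supp : HasCompactSupport ψ :=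
    HasCompactSupport.convolution _ φb.hasCompactSupport_normed hu_supp
  -- pointwise closeness
  have hclose : ∀ x : ℝ, |ψ x - u x| ≤ ε₂ := by
    intro x
    have := φb.dist_normed_convolution_le (μ := volume) hu_cont.aestronglyMeasurable
      (x₀ := x) (ε := ε₂) ?_
    · rwa [Real.dist_eq] at this
    · intro y hy
      apply le_of_lt
      apply hr
      have : dist y x < r' := by rwa [mem_ball] at hy
      exact lt_of_lt_of_le this (min_le_left _ _)
  -- support of ψ - u inside closedBall 0 (R+1)
  have hsub_supp : ∀ x : ℝ, x ∉ closedBall (0:ℝ) (R + 1) → ψ x - u x = 0 := by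
    intro x hx
    have hux : u x = 0 := by
      apply image_eq_zero_of_notMem_tsupport
      intro hmem
      exact hx (closedBall_subset_closedBall (by linarith) (hR hmem))
    have hψx : ψ x = 0 := by
      by_contra hne
      have hx' : x ∈ support (φb.normed volume) + support u :=
        support_convolution_subset _ (Function.mem_support.2 hne)
      obtain ⟨p, hp, q, hq, rfl⟩ := hx'
      rw [φb.support_normed_eq] at hp
      have hq' : q ∈ closedBall (0:ℝ) R := hR (subset_tsupport _ hq)
      simp only [mem_ball, mem_closedBall, dist_zero_right] at hp hq'
      apply hx
      simp only [mem_closedBall, dist_zero_right]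
      calc ‖p + q‖ ≤ ‖p‖ + ‖q‖ := norm_add_le _ _
        _ ≤ r' + R := add_le_add hp.le hq'
        _ ≤ 1 + R := by
            have := min_le_right r 1
            simp only [hr'def]
            linarith
        _ = R + 1 := by ring
    rw [hψx, hux, sub_zero]
  -- L² bound for ψ - u
  have hψu_cont : Continuous (fun x => (ψ x - u x) ^ 2) :=
    ((hψ_smooth.continuous).sub hu_cont).pow 2
  have hψu_supp : HasCompactSupport (fun x => ψ x - u x) := by
    simpa [sub_eq_add_neg, Pi.add_def, Pi.neg_def] using hψ_supp.add hu_supp.neg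
  have hcs2 : HasCompactSupport (fun x => (ψ x - u x) ^ 2) :=
    HasCompactSupport.comp_left (g := fun t : ℝ => t ^ 2) hψu_supp (by simp)
  have hψu : ∫ s, (ψ s - u s) ^ 2 ≤ δ / 4 := by
    have hKm : MeasurableSet (closedBall (0:ℝ) (R+1)) := measurableSet_closedBall
    have heq : ∫ s, (ψ s - u s) ^ 2 = ∫ s in closedBall (0:ℝ) (R+1), (ψ s - u s) ^ 2 := by
      symm
      apply setIntegral_eq_integral_of_forall_compl_eq_zero
      intro x hx
      rw [hsub_supp x hx]
      ring
    rw [heq]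
    have hfin : volume (closedBall (0:ℝ) (R+1)) < ⊤ := measure_closedBall_lt_top
    calc ∫ s in closedBall (0:ℝ) (R+1), (ψ s - u s) ^ 2
        ≤ ∫ _ in closedBall (0:ℝ) (R+1), ε₂ ^ 2 := by
          apply setIntegral_mono_on
          · exact (hψu_cont.integrable_of_hasCompactSupport
              (hcs2)).integrableOn
          · exact integrableOn_const hfin.ne
          · exact hKm
          · intro x _
            rw [← sq_abs]
            exact pow_le_pow_left₀ (abs_nonneg _) (hclose x) 2
      _ = ε₂ ^ 2 * T := by
          rw [setIntegral_const]
          rw [smul_eq_mul, mul_comm]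
          rfl
      _ ≤ (δ / (4 * (T + 1))) * T := by
          apply mul_le_mul_of_nonneg_right _ hTnn
          rw [hε₂def]
          rw [Real.sq_sqrt (by positivity)]
      _ ≤ δ / 4 := by
          rw [div_mul_eq_mul_div, div_le_div_iff₀ (by positivity) (by norm_num)]
          nlinarith
  -- combine
  refine ⟨ψ, hψ_smooth, hψ_supp, ?_⟩
  have hψ_mem : MemLp ψ 2 volume :=
    hψ_smooth.continuous.memLp_of_hasCompactSupport hψ_supp
  have hint1 : Integrable (fun s => (ψ s - u s) ^ 2) :=
    hψu_cont.integrable_of_hasCompactSupport hcs2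
  have hint2 : Integrable (fun s => (u s - g s) ^ 2) := by
    have : MemLp (fun s => u s - g s) 2 volume := hu_mem.sub hg
    exact this.integrable_sq
  have hint3 : Integrable (fun s => (ψ s - g s) ^ 2) := (hψ_mem.sub hg).integrable_sq
  calc ∫ s, (ψ s - g s) ^ 2
      ≤ ∫ s, (2 * (ψ s - u s) ^ 2 + 2 * (u s - g s) ^ 2) := by
        apply integral_mono hint3 ((hint1.const_mul 2).add (hint2.const_mul 2))
        intro s
        simp only [Pi.add_apply]
        nlinarith [sq_nonneg (ψ s - u s), sq_nonneg (u s - g s), sq_nonneg ((ψ s - u s) - (u s - g s))]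
    _ = 2 * (∫ s, (ψ s - u s) ^ 2) + 2 * (∫ s, (u s - g s) ^ 2) := by
        rw [integral_add (hint1.const_mul 2) (hint2.const_mul 2),
          integral_const_mul, integral_const_mul]
    _ ≤ 2 * (δ / 4) + 2 * (δ / 4) := by
        have h1 : (2:ℝ) * (∫ s, (ψ s - u s) ^ 2) ≤ 2 * (δ / 4) := by linarith
        have h2 : (2:ℝ) * (∫ s, (u s - g s) ^ 2) ≤ 2 * (δ / 4) := by linarith
        exact add_le_add h1 h2
    _ = δ := by ring

lemma exists_primitive_approx (g : ℝ → ℝ) (hg2 : MemLp g 2 volume)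
    (hg1 : Integrable g volume) {δ : ℝ} (hδ : 0 < δ) :
    ∃ φ : ℝ → ℝ, ContDiff ℝ 2 φ ∧ HasCompactSupport φ ∧
      ∫ s, (deriv φ s - g s) ^ 2 ≤ δ := by
  obtain ⟨ψ, hψsm, hψsupp, hψclose⟩ := smooth_L2_approx g hg2 (by positivity : (0:ℝ) < δ/4)
  set c : ℝ := ∫ s, ψ s with hc
  set L : ℝ := max 1 (2 * c ^ 2 / δ) with hL
  have hL1 : (1:ℝ) ≤ L := le_max_left _ _
  have hLpos : 0 < L := lt_of_lt_of_le one_pos hL1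
  have hLc : 2 * c ^ 2 / δ ≤ L := le_max_right _ _
  set B : ContDiffBump (0:ℝ) := ⟨L, 2*L, hLpos, by linarith⟩ with hB
  set χ : ℝ → ℝ := B.normed volume with hχ
  have hχcont : Continuous χ := B.continuous_normed
  have hχsupp : HasCompactSupport χ := B.hasCompactSupport_normed
  have hχint : Integrable χ volume := B.integrable_normed
  have hχ1 : ∫ s, χ s = 1 := B.integral_normed
  have hχnn : ∀ x, 0 ≤ χ x := B.nonneg_normed
  have hχle : ∀ x, χ x ≤ 1 / (2 * L) := by
    intro x
    have := B.normed_le_div_measure_closedBall_rIn (μ := volume) x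
    rwa [Real.volume_real_closedBall B.rIn_pos.le] at this
  have hχsq : ∫ s, (χ s) ^ 2 ≤ 1 / (2 * L) := by
    have hmono : ∀ s, (χ s) ^ 2 ≤ (1 / (2 * L)) * χ s := by
      intro s
      have h1 := hχle s
      have h2 := hχnn s
      nlinarith
    calc ∫ s, (χ s) ^ 2 ≤ ∫ s, (1 / (2 * L)) * χ s := by
          apply integral_mono _ (hχint.const_mul _) hmono
          exact ((hχcont.pow 2).integrable_of_hasCompactSupport
            (by simpa only [Function.comp_def, Pi.pow_def] using HasCompactSupport.comp_left (g := fun t : ℝ => t ^ 2) hχsupp (by simp)))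
      _ = (1 / (2 * L)) * ∫ s, χ s := integral_const_mul _ _
      _ = 1 / (2 * L) := by rw [hχ1, mul_one]
  -- the corrected function f with zero mean
  set f : ℝ → ℝ := fun s => ψ s - c * χ s with hf
  have hψcont : Continuous ψ := hψsm.continuous
  have hψint : Integrable ψ volume := hψcont.integrable_of_hasCompactSupport hψsupp
  have hfc : Continuous f := hψcont.sub (continuous_const.mul hχcont)
  have hfsm : ContDiff ℝ 1 f := by
    apply ContDiff.sub (hψsm.of_le (by norm_num))
    exact contDiff_const.mul (B.contDiff_normed (n := 1))
  have hfsupp : HasCompactSupport f := by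
    have : HasCompactSupport (fun s => c * χ s) := by
      have := hχsupp.mul_left (f := fun _ => c)
      simpa [Pi.mul_def] using this
    simpa [hf, sub_eq_add_neg, Pi.add_def, Pi.neg_def] using hψsupp.add this.neg
  have hfint : Integrable f volume := hfc.integrable_of_hasCompactSupport hfsupp
  have hftotal : ∫ s, f s = 0 := by
    rw [hf]
    rw [integral_sub hψint (hχint.const_mul c), integral_const_mul, hχ1]
    simp [hc]
  -- L² estimate for f - g
  have hψg_int : Integrable (fun s => (ψ s - g s) ^ 2) := by
    have : MemLp (fun s => ψ s - g s) 2 volume :=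
      (hψcont.memLp_of_hasCompactSupport hψsupp).sub hg2
    exact this.integrable_sq
  have hχsq_int : Integrable (fun s => (χ s) ^ 2) :=
    (hχcont.pow 2).integrable_of_hasCompactSupport
      (by simpa only [Function.comp_def, Pi.pow_def] using HasCompactSupport.comp_left (g := fun t : ℝ => t ^ 2) hχsupp (by simp))
  have hfg : ∫ s, (f s - g s) ^ 2 ≤ δ := by
    have hfg_int : Integrable (fun s => (f s - g s) ^ 2) := by
      have h1 : MemLp f 2 volume := hfc.memLp_of_hasCompactSupport hfsupp
      exact (h1.sub hg2).integrable_sq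
    calc ∫ s, (f s - g s) ^ 2
        ≤ ∫ s, (2 * (ψ s - g s) ^ 2 + 2 * (c ^ 2 * (χ s) ^ 2)) := by
          apply integral_mono hfg_int
            ((hψg_int.const_mul 2).add ((hχsq_int.const_mul (c^2)).const_mul 2))
          intro s
          simp only [hf, Pi.add_apply]
          nlinarith [sq_nonneg (ψ s - g s + c * χ s), sq_nonneg (ψ s - g s - c * χ s)]
      _ = 2 * (∫ s, (ψ s - g s) ^ 2) + 2 * (c ^ 2 * ∫ s, (χ s) ^ 2) := by
          rw [integral_add (hψg_int.const_mul 2) ((hχsq_int.const_mul (c^2)).const_mul 2),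
            integral_const_mul, integral_const_mul, integral_const_mul]
      _ ≤ 2 * (δ / 4) + 2 * (c ^ 2 * (1 / (2 * L))) := by
          have h1 : (2:ℝ) * (∫ s, (ψ s - g s) ^ 2) ≤ 2 * (δ / 4) := by linarith
          have h2 : c ^ 2 * (∫ s, (χ s) ^ 2) ≤ c ^ 2 * (1 / (2 * L)) :=
            mul_le_mul_of_nonneg_left hχsq (sq_nonneg c)
          linarith
      _ ≤ 2 * (δ / 4) + δ / 2 := by
          have : c ^ 2 * (1 / (2 * L)) ≤ δ / 4 := by
            rw [div_le_iff₀ (by positivity)] at hLc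
            rw [mul_one_div, div_le_div_iff₀ (by positivity) (by norm_num)]
            nlinarith
          linarith
      _ = δ := by ring
  -- support bound for f
  obtain ⟨M₀, hM₀⟩ := hfsupp.isBounded.subset_closedBall 0
  set M : ℝ := max M₀ 0 with hM
  have hMsupp : tsupport f ⊆ closedBall 0 M :=
    hM₀.trans (closedBall_subset_closedBall (le_max_left _ _))
  have hM0 : 0 ≤ M := le_max_right _ _
  have hfz : ∀ x, M < |x| → f x = 0 := by
    intro x hx
    apply image_eq_zero_of_notMem_tsupport
    intro hmem
    have := hMsupp hmem
    simp only [mem_closedBall, dist_zero_right, Real.norm_eq_abs] at this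
    linarith
  -- the primitive
  set φ : ℝ → ℝ := fun x => ∫ t in (-(M+1))..x, f t with hφ
  have hderiv : ∀ x, HasDerivAt φ (f x) x := by
    intro x
    exact intervalIntegral.integral_hasDerivAt_right
      (hfc.intervalIntegrable _ _) (hfc.stronglyMeasurableAtFilter _ _) hfc.continuousAt
  have hd : deriv φ = f := funext fun x => (hderiv x).deriv
  have hφsm : ContDiff ℝ 2 φ := by
    rw [show (2 : WithTop ℕ∞) = 1 + 1 from by norm_num, contDiff_succ_iff_deriv]
    refine ⟨fun x => (hderiv x).differentiableAt, by simp, ?_⟩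
    rw [hd]; exact hfsm
  have hφzero_left : ∀ x, x ≤ -(M+1) → φ x = 0 := by
    intro x hx
    have : EqOn f 0 (Set.uIcc (-(M+1)) x) := by
      intro t ht
      rw [Set.uIcc_of_ge hx] at ht
      apply hfz
      have h1 : t ≤ -(M+1) := ht.2
      rw [abs_of_nonpos (by linarith)]
      linarith
    rw [hφ]
    simp only
    rw [intervalIntegral.integral_congr this]
    simp
  have hφzero_right : ∀ x, M + 1 ≤ x → φ x = 0 := by
    intro x hx
    have hsub : Function.support f ⊆ Set.Ioc (-(M+1)) x := by
      intro t ht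
      have h1 : t ∈ tsupport f := subset_tsupport _ ht
      have := hMsupp h1
      simp only [mem_closedBall, dist_zero_right, Real.norm_eq_abs] at this
      rw [abs_le] at this
      constructor <;> [linarith; linarith]
    rw [hφ]
    simp only
    rw [intervalIntegral.integral_eq_integral_of_support_subset hsub]
    exact hftotal
  have hφsupp : HasCompactSupport φ := by
    apply HasCompactSupport.intro (isCompact_Icc (a := -(M+1)) (b := M+1))
    intro x hx
    simp only [Set.mem_Icc, not_and_or, not_le] at hx
    rcases hx with h | h
    · exact hφzero_left x h.le
    · exact hφzero_right x h.le
  refine ⟨φ, hφsm, hφsupp, ?_⟩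
  rw [hd]
  exact hfg


/-- Lemma 3.4: `inf { F(η) : η ∈ C²_c(ℝ²) } = 0`, where
`F(η) = ∫_ℝ ∫_Σ [∂_s η(H y, s) + 2 q₀'(s)² H(y)]² dℋ^{n-1}(y) ds`. -/
theorem stmt14 (n : ℕ) (hn : 1 ≤ n) (W q₀ : ℝ → ℝ) (a b C σ : ℝ) (hab : a < b)
    (hCpos : 0 < C) (hWnn : ∀ u, 0 ≤ W u)
    (hq₀mem : ∀ s, q₀ s ∈ Set.Ioo a b)
    (hq₀ : ∀ s, HasDerivAt q₀ (Real.sqrt (W (q₀ s))) s)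
    (hq₀0 : q₀ 0 = (a + b) / 2)
    (hq₀' : ∀ s, 0 < deriv q₀ s ∧ deriv q₀ s ≤ C * Real.exp (-|s| / C))
    (hσ : σ = 2 * ∫ s : ℝ, (deriv q₀ s) ^ 2)
    (S : Set (EuclideanSpace ℝ (Fin n))) (hSc : IsCompact S)
    (hSm : MeasurableSet S) (hSfin : μH[(n : ℝ) - 1] S < ⊤)
    (H : EuclideanSpace ℝ (Fin n) → ℝ) (hH : ContinuousOn H S)
    (hHb : ∃ K, ∀ y ∈ S, |H y| ≤ K) :
    sInf { x : ℝ | ∃ η : ℝ × ℝ → ℝ, ContDiff ℝ 2 η ∧ HasCompactSupport η ∧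
      x = ∫ s : ℝ, ∫ y in S,
        (deriv (fun s' => η (H y, s')) s + 2 * (deriv q₀ s) ^ 2 * H y) ^ 2
          ∂(μH[(n : ℝ) - 1]) } = 0 := by
  obtain ⟨K, hK⟩ := hHb
  set μ : Measure (EuclideanSpace ℝ (Fin n)) := μH[(n : ℝ) - 1] with hμ
  set 𝒮 : Set ℝ := { x : ℝ | ∃ η : ℝ × ℝ → ℝ, ContDiff ℝ 2 η ∧ HasCompactSupport η ∧
      x = ∫ s : ℝ, ∫ y in S,
        (deriv (fun s' => η (H y, s')) s + 2 * (deriv q₀ s) ^ 2 * H y) ^ 2 ∂μ } with h𝒮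
  have hnonneg : ∀ x ∈ 𝒮, 0 ≤ x := by
    rintro x ⟨η, _, _, rfl⟩
    apply integral_nonneg
    intro s
    apply integral_nonneg
    intro y
    exact sq_nonneg _
  have hne : 𝒮.Nonempty := by
    refine ⟨_, (fun _ : ℝ × ℝ => (0:ℝ)), contDiff_const, ?_, rfl⟩
    apply HasCompactSupport.intro (isCompact_singleton (x := ((0:ℝ),(0:ℝ))))
    intro x _
    rfl
  have hbdd : BddBelow 𝒮 := ⟨0, fun x hx => hnonneg x hx⟩
  -- the profile function g
  set g : ℝ → ℝ := fun s => 2 * (deriv q₀ s) ^ 2 with hg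
  have hgm : Measurable g := ((measurable_deriv q₀).pow_const 2).const_mul 2
  have hgbound : ∀ s, 0 ≤ g s ∧ g s ≤ 2 * C ^ 2 * Real.exp (-(2/C) * |s|) ∧ g s ≤ 2 * C ^ 2 := by
    intro s
    obtain ⟨h1, h2⟩ := hq₀' s
    have hexp : Real.exp (-|s| / C) ^ 2 = Real.exp (-(2/C) * |s|) := by
      rw [sq, ← Real.exp_add]
      congr 1
      field_simp
      ring
    have he1 : Real.exp (-|s| / C) ≤ 1 := by
      apply Real.exp_le_one_iff.2
      apply div_nonpos_of_nonpos_of_nonneg _ hCpos.le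
      simp [abs_nonneg s]
    refine ⟨by positivity, ?_, ?_⟩
    · have : (deriv q₀ s) ^ 2 ≤ (C * Real.exp (-|s| / C)) ^ 2 := by nlinarith
      rw [mul_pow, hexp] at this
      simp only [hg]
      nlinarith
    · have hd : deriv q₀ s ≤ C := by nlinarith [Real.exp_pos (-|s| / C)]
      simp only [hg]
      nlinarith
  have hgint : Integrable g volume := by
    apply Integrable.mono' ((integrable_exp_neg_abs (b := 2/C) (by positivity)).const_mul (2 * C ^ 2))
    · exact hgm.aestronglyMeasurable
    · refine Filter.Eventually.of_forall fun s => ?_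
      obtain ⟨h0, h1, _⟩ := hgbound s
      rw [Real.norm_eq_abs, abs_of_nonneg h0]
      calc g s ≤ 2 * C ^ 2 * Real.exp (-(2/C) * |s|) := h1
        _ = 2 * C ^ 2 * Real.exp (-(2/C) * |s|) := rfl
  have hgsq_int : Integrable (fun s => g s ^ 2) volume := by
    apply Integrable.mono' (hgint.const_mul (2 * C ^ 2))
    · exact (hgm.pow_const 2).aestronglyMeasurable
    · refine Filter.Eventually.of_forall fun s => ?_
      obtain ⟨h0, _, h2⟩ := hgbound s
      rw [Real.norm_eq_abs, abs_of_nonneg (by positivity)]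
      nlinarith
  have hgmem : MemLp g 2 volume :=
    (memLp_two_iff_integrable_sq hgm.aestronglyMeasurable).2 hgsq_int
  -- the H-integral
  set IH : ℝ := ∫ y in S, (H y) ^ 2 ∂μ with hIH
  have hIHnn : 0 ≤ IH := integral_nonneg fun y => sq_nonneg _
  apply le_antisymm
  · apply le_of_forall_pos_le_add
    intro ε hε
    rw [zero_add]
    set δ : ℝ := ε / (IH + 1) with hδdef
    have hδpos : 0 < δ := by positivity
    obtain ⟨φ, hφsm, hφsupp, hφclose⟩ := exists_primitive_approx g hgmem hgint hδpos
    -- cutoff in the first variable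
    set K' : ℝ := |K| + 1 with hK'
    have hK'pos : 0 < K' := by positivity
    set θ : ContDiffBump (0:ℝ) := ⟨K', K' + 1, hK'pos, by linarith⟩ with hθ
    set ζ : ℝ → ℝ := fun t => t * θ t with hζ
    have hζsm : ContDiff ℝ 2 ζ := contDiff_id.mul (θ.contDiff (n := 2))
    have hζsupp : HasCompactSupport ζ := by
      have := θ.hasCompactSupport.mul_left (f := fun t : ℝ => t)
      exact this
    have hζeq : ∀ t : ℝ, |t| ≤ |K| → ζ t = t := by
      intro t ht
      have : t ∈ Metric.closedBall (0:ℝ) K' := by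
        simp only [Metric.mem_closedBall, dist_zero_right, Real.norm_eq_abs]
        simp only [hK']
        linarith
      rw [hζ]
      simp only
      rw [θ.one_of_mem_closedBall this, mul_one]
    set η : ℝ × ℝ → ℝ := fun p => -(ζ p.1 * φ p.2) with hη
    have hηsm : ContDiff ℝ 2 η :=
      (((hζsm.comp contDiff_fst).mul (hφsm.comp contDiff_snd))).neg
    have hηsupp : HasCompactSupport η := by
      apply HasCompactSupport.intro (hζsupp.prod hφsupp)
      intro p hp
      simp only [Set.mem_prod, not_and_or] at hp
      rcases hp with h | h
      · simp [hη, image_eq_zero_of_notMem_tsupport h]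
      · simp [hη, image_eq_zero_of_notMem_tsupport h]
    -- derivative computation
    have hφd : ∀ s, HasDerivAt φ (deriv φ s) s := fun s =>
      ((hφsm.differentiable (by norm_num)) s).hasDerivAt
    have hderiv_eq : ∀ y ∈ S, ∀ s : ℝ,
        deriv (fun s' => η (H y, s')) s = -(H y * deriv φ s) := by
      intro y hy s
      have h1 : HasDerivAt (fun s' => η (H y, s')) (-(ζ (H y) * deriv φ s)) s := by
        have := ((hφd s).const_mul (ζ (H y))).neg
        exact this
      rw [h1.deriv, hζeq (H y) ((hK y hy).trans (le_abs_self K))]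
    -- compute F(η)
    set A : ℝ := ∫ s, (deriv φ s - g s) ^ 2 with hA
    have hAnn : 0 ≤ A := integral_nonneg fun s => sq_nonneg _
    have key : (∫ s : ℝ, ∫ y in S,
        (deriv (fun s' => η (H y, s')) s + 2 * (deriv q₀ s) ^ 2 * H y) ^ 2 ∂μ) = A * IH := by
      have hinner : ∀ s : ℝ, (∫ y in S,
          (deriv (fun s' => η (H y, s')) s + 2 * (deriv q₀ s) ^ 2 * H y) ^ 2 ∂μ)
          = (deriv φ s - g s) ^ 2 * IH := by
        intro s
        have h1 : (∫ y in S,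
            (deriv (fun s' => η (H y, s')) s + 2 * (deriv q₀ s) ^ 2 * H y) ^ 2 ∂μ)
            = ∫ y in S, (deriv φ s - g s) ^ 2 * (H y) ^ 2 ∂μ := by
          apply setIntegral_congr_fun hSm
          intro y hy
          simp only [hderiv_eq y hy s, hg]
          ring
        rw [h1, integral_const_mul]
      calc (∫ s : ℝ, ∫ y in S,
            (deriv (fun s' => η (H y, s')) s + 2 * (deriv q₀ s) ^ 2 * H y) ^ 2 ∂μ)
          = ∫ s : ℝ, (deriv φ s - g s) ^ 2 * IH := by
            congr 1; funext s; exact hinner s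
        _ = A * IH := integral_mul_const IH _
    have hmem : A * IH ∈ 𝒮 := ⟨η, hηsm, hηsupp, key.symm⟩
    have h1 : sInf 𝒮 ≤ A * IH := csInf_le hbdd hmem
    have h2 : A * IH ≤ δ * IH := mul_le_mul_of_nonneg_right hφclose hIHnn
    have h3 : δ * IH ≤ ε := by
      rw [hδdef, div_mul_eq_mul_div, div_le_iff₀ (by positivity)]
      nlinarith
    linarith
  · exact le_csInf hne fun x hx => hnonneg x hx
end

section
/- Let q_ε(t,s) solve ∂_s q_ε = √(W(q_ε) - ε η(t,s)) with q_ε(t,0) = (a+b)/2, where η ∈ C²_c(ℝ²) with support in [-R,R]², and 0 ≤ ε < ε₀ where ε₀ · max|η| < min_{|s| ≤ R} W(q₀(2s)). Then for every t, the maximal solution s ↦ q_ε(t,s) is defined on all of ℝ. Moreover q₀(2s) ≤ q_ε(t,s) ≤ (a+b)/2 for s ≤ 0 and (a+b)/2 ≤ q_ε(t,s) ≤ q₀(2s) for s ≥ 0 on the maximal interval. -/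
open Set

private lemma sqrt_diff_le' {r u v : ℝ} (hr : 0 < r) (hu : r ≤ u) (hv : r ≤ v) :
    |Real.sqrt u - Real.sqrt v| ≤ |u - v| / (2 * Real.sqrt r) := by
  have hrs : 0 < Real.sqrt r := Real.sqrt_pos.2 hr
  have hus : Real.sqrt r ≤ Real.sqrt u := Real.sqrt_le_sqrt hu
  have hvs : Real.sqrt r ≤ Real.sqrt v := Real.sqrt_le_sqrt hv
  have hu2 : Real.sqrt u * Real.sqrt u = u := Real.mul_self_sqrt (hr.le.trans hu)
  have hv2 : Real.sqrt v * Real.sqrt v = v := Real.mul_self_sqrt (hr.le.trans hv)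
  rw [le_div_iff₀ (by positivity)]
  have e : (Real.sqrt u - Real.sqrt v) * (Real.sqrt u + Real.sqrt v) = u - v := by
    linear_combination hu2 - hv2
  have key : |u - v| = |Real.sqrt u - Real.sqrt v| * (Real.sqrt u + Real.sqrt v) := by
    rw [← e, abs_mul, abs_of_nonneg (by positivity : (0:ℝ) ≤ Real.sqrt u + Real.sqrt v)]
  rw [key]
  exact mul_le_mul_of_nonneg_left (by linarith) (abs_nonneg _)

/-- Lemma 2.4: for `0 ≤ ε < ε₀` (with `ε₀ max|η| < min_{|s|≤R} W(q₀(2s))`), the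
perturbed profile equation `∂_s q = √(W(q) - ε η(t,s))`, `q(t,0) = (a+b)/2` has a
globally defined solution, squeezed between `q₀(2s)` and `(a+b)/2`. -/
theorem stmt16 (W : ℝ → ℝ) (a b R ε₀ ε : ℝ) (hab : a < b)
    (hWnn : ∀ u, 0 ≤ W u) (hWC2 : ContDiff ℝ 2 W)
    (hWa : W a = 0) (hWb : W b = 0) (hWpos : ∀ u ∈ Set.Ioo a b, 0 < W u)
    (q₀ : ℝ → ℝ) (hq₀mem : ∀ s, q₀ s ∈ Set.Ioo a b)
    (hq₀ : ∀ s, HasDerivAt q₀ (Real.sqrt (W (q₀ s))) s)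
    (hq₀0 : q₀ 0 = (a + b) / 2)
    (hR : 0 < R) (η : ℝ × ℝ → ℝ) (hη : ContDiff ℝ 2 η)
    (hηsupp : Function.support η ⊆ Set.Icc (-R) R ×ˢ Set.Icc (-R) R)
    (hε₀ : 0 < ε₀)
    (hsmall : ∀ t s s' : ℝ, |s'| ≤ R → ε₀ * |η (t, s)| < W (q₀ (2 * s')))
    (hε : 0 ≤ ε) (hεlt : ε < ε₀) :
    ∀ t : ℝ, ∃ q : ℝ → ℝ, q 0 = (a + b) / 2 ∧
      (∀ s, HasDerivAt q (Real.sqrt (W (q s) - ε * η (t, s))) s) ∧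
      (∀ s ≤ 0, q₀ (2 * s) ≤ q s ∧ q s ≤ (a + b) / 2) ∧
      (∀ s, 0 ≤ s → (a + b) / 2 ≤ q s ∧ q s ≤ q₀ (2 * s)) := by
  intro t
  -- basic continuity facts
  have hq₀cont : Continuous q₀ := by
    rw [continuous_iff_continuousAt]; exact fun s => (hq₀ s).continuousAt
  have hWcont : Continuous W := hWC2.continuous
  have hVpos : ∀ y : ℝ, 0 < W (q₀ y) := fun y => hWpos _ (hq₀mem y)
  have hsqrt2 : Real.sqrt 2 ≤ 2 := by
    nlinarith [Real.sq_sqrt (by norm_num : (0:ℝ) ≤ 2), Real.sqrt_nonneg 2]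
  -- the perturbation h
  set h : ℝ → ℝ := fun s => ε * η (t, s) with hhdef
  have hhcont : Continuous h :=
    continuous_const.mul (hη.continuous.comp (continuous_const.prodMk continuous_id))
  have hh0 : ∀ s : ℝ, R < |s| → h s = 0 := by
    intro s hs
    have : η (t, s) = 0 := by
      by_contra hne
      have := (hηsupp (Function.mem_support.2 hne)).2
      rw [Set.mem_Icc] at this
      exact absurd (abs_le.2 this) (not_le.2 hs)
    simp [hhdef, this]
  -- the minimum M of W ∘ q₀ on [-2R, 2R]
  obtain ⟨s₀, hs₀, hs₀min⟩ := (isCompact_Icc (a := -R) (b := R)).exists_isMinOn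
    (nonempty_Icc.2 (by linarith)) ((hWcont.comp (hq₀cont.comp
      (continuous_const.mul continuous_id))).continuousOn)
  set M := W (q₀ (2 * s₀)) with hMdef
  have hMpos : 0 < M := hVpos _
  have hMle : ∀ y ∈ Icc (-(2*R)) (2*R), M ≤ W (q₀ y) := by
    intro y hy
    have h2 : y / 2 ∈ Icc (-R) R := ⟨by linarith [hy.1], by linarith [hy.2]⟩
    have h3 : W (q₀ (2 * s₀)) ≤ W (q₀ (2 * (y / 2))) := hs₀min h2
    rw [show 2 * (y / 2) = y by ring] at h3
    exact h3
  have hMη : ∀ s : ℝ, ε₀ * |η (t, s)| < M :=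
    fun s => hsmall t s s₀ (abs_le.2 ⟨hs₀.1, hs₀.2⟩)
  set r := ε / ε₀ with hrdef
  have hr0 : 0 ≤ r := by positivity
  have hr1 : r < 1 := (div_lt_one hε₀).2 hεlt
  have hhle : ∀ s, |h s| ≤ r * M := by
    intro s
    have e1 : |h s| = r * (ε₀ * |η (t, s)|) := by
      rw [hhdef]; simp only [abs_mul, abs_of_nonneg hε]
      rw [hrdef]; field_simp
    rw [e1]
    exact mul_le_mul_of_nonneg_left (hMη s).le hr0
  set ρ := 1 - r with hρdef
  have hρ : 0 < ρ := by simp [hρdef]; linarith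
  -- the clamp function
  set cl : ℝ → ℝ := fun x => max (-(2*R)) (min (2*R) x) with hcldef
  have hclmem : ∀ x, cl x ∈ Icc (-(2*R)) (2*R) := by
    intro x
    constructor
    · exact le_max_left _ _
    · exact max_le (by linarith) (min_le_left _ _)
  have hclid : ∀ x : ℝ, |x| ≤ 2*R → cl x = x := by
    intro x hx
    rw [abs_le] at hx
    rw [hcldef]; simp only []
    rw [min_eq_right hx.2, max_eq_right hx.1]
  have hcllip : ∀ x y : ℝ, |cl x - cl y| ≤ |x - y| := by
    intro x y
    calc |cl x - cl y| ≤ max |(-(2*R)) - (-(2*R))| |min (2*R) x - min (2*R) y| :=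
          abs_max_sub_max_le_max _ _ _ _
      _ = |min (2*R) x - min (2*R) y| := by simp
      _ ≤ max |(2*R) - (2*R)| |x - y| := abs_min_sub_min_le_max _ _ _ _
      _ = |x - y| := by simp
  -- F and g
  set F : ℝ → ℝ := fun x => (W (q₀ (cl x)))⁻¹ with hFdef
  have hFpos : ∀ x, 0 < F x := fun x => inv_pos.2 (hVpos _)
  have hFle : ∀ x, F x ≤ M⁻¹ := fun x => inv_anti₀ hMpos (hMle _ (hclmem x))
  have hAub : ∀ s x, |h s * F x| ≤ r := by
    intro s x
    rw [abs_mul]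
    calc |h s| * |F x| ≤ (r * M) * M⁻¹ := by
          apply mul_le_mul (hhle s) _ (abs_nonneg _) (by positivity)
          rw [abs_of_pos (hFpos x)]; exact hFle x
      _ = r := by field_simp
  have hAlb : ∀ s x, ρ ≤ 1 - h s * F x := by
    intro s x
    have := (abs_le.1 (hAub s x)).2
    rw [hρdef]; linarith
  have hAub2 : ∀ s x, 1 - h s * F x ≤ 2 := by
    intro s x
    have := (abs_le.1 (hAub s x)).1
    linarith
  set g : ℝ → ℝ → ℝ := fun s x => Real.sqrt (1 - h s * F x) with hgdef
  have hglb : ∀ s x, Real.sqrt ρ ≤ g s x := fun s x => Real.sqrt_le_sqrt (hAlb s x)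
  have hgub : ∀ s x, g s x ≤ Real.sqrt 2 := fun s x => Real.sqrt_le_sqrt (hAub2 s x)
  have hρs : 0 < Real.sqrt ρ := Real.sqrt_pos.2 hρ
  have hgpos : ∀ s x, 0 < g s x := fun s x => lt_of_lt_of_le hρs (hglb s x)
  have hgub2 : ∀ s x, g s x ≤ 2 := fun s x => (hgub s x).trans hsqrt2
  have hgone : ∀ s x, h s = 0 → g s x = 1 := by
    intro s x hs; rw [hgdef]; simp [hs]
  -- Lipschitz constant for V = W ∘ q₀
  have hWdiff : Differentiable ℝ W := hWC2.differentiable (by norm_num)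
  obtain ⟨KW, hKW⟩ := (isCompact_Icc (a := a) (b := b)).exists_bound_of_continuousOn
    ((hWC2.continuous_deriv (by norm_num)).continuousOn)
  have hKW0 : 0 ≤ KW := le_trans (norm_nonneg _) (hKW a ⟨le_rfl, hab.le⟩)
  have hWlip : ∀ u v : ℝ, u ∈ Icc a b → v ∈ Icc a b → |W u - W v| ≤ KW * |u - v| := by
    intro u v hu hv
    have := Convex.norm_image_sub_le_of_norm_hasDerivWithin_le
      (f := W) (f' := deriv W) (s := Icc a b) (C := KW)
      (fun x _ => (hWdiff x).hasDerivAt.hasDerivWithinAt) hKW (convex_Icc a b) hv hu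
    simpa [Real.norm_eq_abs] using this
  -- q₀ is Lipschitz
  obtain ⟨u₁, hu₁, hu₁max⟩ := (isCompact_Icc (a := a) (b := b)).exists_isMaxOn
    (nonempty_Icc.2 hab.le) hWcont.continuousOn
  set Kq := Real.sqrt (W u₁) with hKqdef
  have hKq0 : 0 ≤ Kq := Real.sqrt_nonneg _
  have hq₀lip : ∀ u v : ℝ, |q₀ u - q₀ v| ≤ Kq * |u - v| := by
    intro u v
    have := Convex.norm_image_sub_le_of_norm_hasDerivWithin_le
      (f := q₀) (f' := fun y => Real.sqrt (W (q₀ y))) (s := univ) (C := Kq)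
      (fun x _ => (hq₀ x).hasDerivWithinAt) (fun x _ => by
        rw [Real.norm_eq_abs, abs_of_nonneg (Real.sqrt_nonneg _)]
        exact Real.sqrt_le_sqrt (hu₁max (Ioo_subset_Icc_self (hq₀mem x))))
      convex_univ (mem_univ v) (mem_univ u)
    simpa [Real.norm_eq_abs] using this
  have hVlip : ∀ u v : ℝ, |W (q₀ u) - W (q₀ v)| ≤ KW * Kq * |u - v| := by
    intro u v
    calc |W (q₀ u) - W (q₀ v)| ≤ KW * |q₀ u - q₀ v| :=
          hWlip _ _ (Ioo_subset_Icc_self (hq₀mem u)) (Ioo_subset_Icc_self (hq₀mem v))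
      _ ≤ KW * (Kq * |u - v|) := mul_le_mul_of_nonneg_left (hq₀lip u v) hKW0
      _ = KW * Kq * |u - v| := by ring
  have hFlip : ∀ x y : ℝ, |F x - F y| ≤ KW * Kq / M ^ 2 * |x - y| := by
    intro x y
    have hvx := hVpos (cl x)
    have hvy := hVpos (cl y)
    have e : F x - F y = (W (q₀ (cl y)) - W (q₀ (cl x))) * (F x * F y) := by
      rw [hFdef]; field_simp
    rw [e, abs_mul]
    have h1 : |W (q₀ (cl y)) - W (q₀ (cl x))| ≤ KW * Kq * |x - y| :=
      (hVlip _ _).trans (by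
        apply mul_le_mul_of_nonneg_left _ (by positivity)
        calc |cl y - cl x| ≤ |y - x| := hcllip y x
          _ = |x - y| := abs_sub_comm _ _)
    have h2 : |F x * F y| ≤ M⁻¹ * M⁻¹ := by
      rw [abs_mul, abs_of_pos (hFpos x), abs_of_pos (hFpos y)]
      exact mul_le_mul (hFle x) (hFle y) (hFpos y).le (by positivity)
    calc |W (q₀ (cl y)) - W (q₀ (cl x))| * |F x * F y|
        ≤ KW * Kq * |x - y| * (M⁻¹ * M⁻¹) :=
          mul_le_mul h1 h2 (abs_nonneg _) (by positivity)
      _ = KW * Kq / M ^ 2 * |x - y| := by rw [div_eq_mul_inv, pow_two, mul_inv]; ring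
  set Kg : ℝ := r * M * (KW * Kq / M ^ 2) / (2 * Real.sqrt ρ) with hKgdef
  have hglip : ∀ s x y : ℝ, |g s x - g s y| ≤ Kg * |x - y| := by
    intro s x y
    calc |g s x - g s y| ≤ |(1 - h s * F x) - (1 - h s * F y)| / (2 * Real.sqrt ρ) :=
          sqrt_diff_le' hρ (hAlb s x) (hAlb s y)
      _ = |h s| * |F x - F y| / (2 * Real.sqrt ρ) := by
          rw [show (1 - h s * F x) - (1 - h s * F y) = h s * (F y - F x) by ring,
            abs_mul, abs_sub_comm (F y)]
      _ ≤ r * M * (KW * Kq / M ^ 2 * |x - y|) / (2 * Real.sqrt ρ) := by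
          apply div_le_div_of_nonneg_right _ (by positivity)
          rw [show r * M * (KW * Kq / M ^ 2 * |x - y|) = (r * M) * (KW * Kq / M ^ 2 * |x - y|) by ring]
          exact mul_le_mul (hhle s) (hFlip x y) (by positivity) (by positivity)
      _ = Kg * |x - y| := by rw [hKgdef]; ring
  -- Picard-Lindelöf on [-(R+1), R+1]
  have hcontg : ∀ x : ℝ, Continuous fun s => g s x := by
    intro x
    rw [hgdef]
    exact Real.continuous_sqrt.comp (continuous_const.sub (hhcont.mul continuous_const))
  have hpl : IsPicardLindelof (fun s x => g s x) (tmin := -(R+1)) (tmax := R+1)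
      ⟨0, by constructor <;> linarith⟩ (0:ℝ) (Real.toNNReal (2*(R+1))) 0 2 (Real.toNNReal Kg) := by
    constructor
    · intro s _
      apply LipschitzWith.lipschitzOnWith
      apply LipschitzWith.of_dist_le_mul
      intro x y
      rw [Real.dist_eq, Real.dist_eq]
      exact (hglip s x y).trans
        (mul_le_mul_of_nonneg_right (Real.le_coe_toNNReal Kg) (abs_nonneg _))
    · intro x _
      exact (hcontg x).continuousOn
    · intro s _ x _
      rw [Real.norm_eq_abs, abs_of_pos (hgpos s x)]
      exact hgub2 s x
    · show ((2:NNReal):ℝ) * max (R + 1 - 0) (0 - -(R+1)) ≤ ((Real.toNNReal (2*(R+1)) : ℝ)) - ((0:NNReal):ℝ)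
      rw [Real.coe_toNNReal _ (by linarith), show max (R + 1 - 0) (0 - -(R+1)) = R + 1 by rw [sub_zero, zero_sub, neg_neg, max_self]]
      norm_num
  obtain ⟨φ₀, hφ₀0, hφ₀⟩ := hpl.exists_eq_forall_mem_Icc_hasDerivWithinAt₀
  replace hφ₀0 : φ₀ 0 = 0 := hφ₀0
  set L : ℝ := R + 1 with hLdef
  -- glue: affine outside [-L, L]
  set φ : ℝ → ℝ := fun s => if s < -L then φ₀ (-L) + (s + L)
    else if s ≤ L then φ₀ s else φ₀ L + (s - L) with hφdef
  have hφeq : ∀ s ∈ Icc (-L) L, φ s = φ₀ s := by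
    intro s hs
    rw [hφdef]
    simp only []
    rw [if_neg (not_lt.2 hs.1), if_pos hs.2]
  have hφ0 : φ 0 = 0 := by
    rw [hφeq 0 ⟨by linarith, by linarith⟩, hφ₀0]
  -- on (R, L], φ₀ is affine with slope 1
  have hright : ∀ s ∈ Ioc R L, φ₀ s = φ₀ L + (s - L) := by
    intro s hs
    have hsub : Icc s L ⊆ Icc (-L) L := Icc_subset_Icc (by linarith [hs.1]) le_rfl
    have key := Convex.norm_image_sub_le_of_norm_hasDerivWithin_le
      (f := fun σ => φ₀ σ - σ) (f' := fun σ => g σ (φ₀ σ) - 1) (s := Icc s L) (C := 0)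
      (fun σ hσ => ((hφ₀ σ (hsub hσ)).mono hsub).sub
        (hasDerivWithinAt_id σ (Icc s L)))
      (fun σ hσ => by
        have h0 : h σ = 0 := hh0 σ (by rw [abs_of_pos (by linarith [hσ.1, hs.1] : (0:ℝ) < σ)]; linarith [hσ.1, hs.1])
        show ‖g σ (φ₀ σ) - 1‖ ≤ 0
        rw [hgone σ _ h0]; simp)
      (convex_Icc s L) (left_mem_Icc.2 hs.2) (right_mem_Icc.2 hs.2)
    simp only [zero_mul, norm_le_zero_iff, sub_eq_zero] at key
    linarith [key]
  have hleft : ∀ s ∈ Ico (-L) (-R), φ₀ s = φ₀ (-L) + (s + L) := by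
    intro s hs
    have hsub : Icc (-L) s ⊆ Icc (-L) L := Icc_subset_Icc le_rfl (by linarith [hs.2])
    have key := Convex.norm_image_sub_le_of_norm_hasDerivWithin_le
      (f := fun σ => φ₀ σ - σ) (f' := fun σ => g σ (φ₀ σ) - 1) (s := Icc (-L) s) (C := 0)
      (fun σ hσ => ((hφ₀ σ (hsub hσ)).mono hsub).sub
        (hasDerivWithinAt_id σ (Icc (-L) s)))
      (fun σ hσ => by
        have h0 : h σ = 0 := hh0 σ (by rw [abs_of_neg (by linarith [hσ.2, hs.2] : σ < 0)]; linarith [hσ.2, hs.2])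
        show ‖g σ (φ₀ σ) - 1‖ ≤ 0
        rw [hgone σ _ h0]; simp)
      (convex_Icc (-L) s) (left_mem_Icc.2 hs.1) (right_mem_Icc.2 hs.1)
    simp only [zero_mul, norm_le_zero_iff, sub_eq_zero] at key
    linarith [key]
  -- derivative of φ everywhere
  have hinterior : ∀ s ∈ Ioo (-L) L, HasDerivAt φ (g s (φ s)) s := by
    intro s hmem
    have hder : HasDerivAt φ₀ (g s (φ₀ s)) s :=
      (hφ₀ s (Ioo_subset_Icc_self hmem)).hasDerivAt (Icc_mem_nhds hmem.1 hmem.2)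
    have heq : φ s = φ₀ s := hφeq _ (Ioo_subset_Icc_self hmem)
    rw [heq]
    exact hder.congr_of_eventuallyEq
      (Filter.eventuallyEq_of_mem (Ioo_mem_nhds hmem.1 hmem.2)
        (fun σ hσ => hφeq σ (Ioo_subset_Icc_self hσ)))
  have hφ' : ∀ s, HasDerivAt φ (g s (φ s)) s := by
    intro s
    rcases lt_or_ge s (-R) with hsc | hsc
    · -- s < -R : φ is affine on Iio (-R)
      have haff : ∀ σ ∈ Iio (-R), φ σ = φ₀ (-L) + (σ + L) := by
        intro σ hσ
        rcases lt_or_ge σ (-L) with hσL | hσL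
        · rw [hφdef]; simp only []; rw [if_pos hσL]
        · rw [hφeq σ ⟨hσL, by linarith [mem_Iio.1 hσ]⟩,
            hleft σ ⟨hσL, mem_Iio.1 hσ⟩]
      have hder : HasDerivAt (fun σ => φ₀ (-L) + (σ + L)) 1 s := by
        simpa using (((hasDerivAt_id s).add_const L).const_add (φ₀ (-L)))
      have hda : HasDerivAt φ 1 s :=
        hder.congr_of_eventuallyEq
          (Filter.eventuallyEq_of_mem (Iio_mem_nhds hsc) haff)
      have hg1 : g s (φ s) = 1 := hgone s _ (hh0 s (by rw [abs_of_neg (by linarith : s < 0)]; linarith))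
      rw [hg1]; exact hda
    · rcases le_or_gt s R with hsc2 | hsc2
      · exact hinterior s ⟨by rw [hLdef]; linarith, by rw [hLdef]; linarith⟩
      · -- s > R : affine on Ioi R
        have haff : ∀ σ ∈ Ioi R, φ σ = φ₀ L + (σ - L) := by
          intro σ hσ
          rcases le_or_gt σ L with hσL | hσL
          · rw [hφeq σ ⟨by rw [hLdef]; linarith [mem_Ioi.1 hσ], hσL⟩,
              hright σ ⟨mem_Ioi.1 hσ, hσL⟩]
          · rw [hφdef]
            simp only []
            rw [if_neg (not_lt.2 (by rw [hLdef]; linarith : -L ≤ σ)), if_neg (not_le.2 hσL)]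
        have hder : HasDerivAt (fun σ => φ₀ L + (σ - L)) 1 s := by
          simpa using (((hasDerivAt_id s).sub_const L).const_add (φ₀ L))
        have hda : HasDerivAt φ 1 s :=
          hder.congr_of_eventuallyEq
            (Filter.eventuallyEq_of_mem (Ioi_mem_nhds hsc2) haff)
        have hg1 : g s (φ s) = 1 := hgone s _ (hh0 s (by rw [abs_of_pos (by linarith : (0:ℝ) < s)]; linarith))
        rw [hg1]; exact hda
  -- monotonicity and growth bounds for φ
  have hφdiff : Differentiable ℝ φ := fun s => (hφ' s).differentiableAt
  have hφmono : Monotone φ := monotone_of_deriv_nonneg hφdiff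
    (fun s => by rw [(hφ' s).deriv]; exact (hgpos s _).le)
  have hu : ∀ s : ℝ, HasDerivAt (fun σ => Real.sqrt 2 * σ - φ σ) (Real.sqrt 2 * 1 - g s (φ s)) s :=
    fun s => ((hasDerivAt_id s).const_mul (Real.sqrt 2)).sub (hφ' s)
  have humono : Monotone (fun σ => Real.sqrt 2 * σ - φ σ) := by
    apply monotone_of_deriv_nonneg (fun s => (hu s).differentiableAt)
    intro s
    rw [(hu s).deriv]
    have := hgub s (φ s); linarith
  have hφneg : ∀ s ≤ 0, Real.sqrt 2 * s ≤ φ s ∧ φ s ≤ 0 := by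
    intro s hs
    have h1 := humono hs
    simp only [hφ0, mul_zero, sub_zero] at h1
    have h2 : φ s ≤ 0 := by
      calc φ s ≤ φ 0 := hφmono hs
        _ = 0 := hφ0
    exact ⟨by linarith, h2⟩
  have hφpos : ∀ s : ℝ, 0 ≤ s → 0 ≤ φ s ∧ φ s ≤ Real.sqrt 2 * s := by
    intro s hs
    have h1 := humono hs
    simp only [hφ0, mul_zero, sub_zero] at h1
    have h2 : 0 ≤ φ s := by
      calc (0:ℝ) = φ 0 := hφ0.symm
        _ ≤ φ s := hφmono hs
    exact ⟨h2, by linarith⟩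
  have hφabs : ∀ s : ℝ, |s| ≤ R → |φ s| ≤ 2 * R := by
    intro s hs
    rw [abs_le] at hs ⊢
    have hs2 : Real.sqrt 2 * (-R) ≤ Real.sqrt 2 * s ∧ Real.sqrt 2 * s ≤ Real.sqrt 2 * R :=
      ⟨mul_le_mul_of_nonneg_left hs.1 (Real.sqrt_nonneg 2),
       mul_le_mul_of_nonneg_left hs.2 (Real.sqrt_nonneg 2)⟩
    have hsqrt0 : 0 ≤ Real.sqrt 2 := Real.sqrt_nonneg 2
    have hRR : Real.sqrt 2 * R ≤ 2 * R := mul_le_mul_of_nonneg_right hsqrt2 hR.le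
    rcases le_or_gt s 0 with h1 | h1
    · obtain ⟨ha1, ha2⟩ := hφneg s h1
      constructor
      · have : Real.sqrt 2 * (-R) = -(Real.sqrt 2 * R) := by ring
        rw [this] at hs2
        linarith [hs2.1]
      · linarith
    · obtain ⟨ha1, ha2⟩ := hφpos s h1.le
      constructor
      · linarith
      · linarith [hs2.2]
  -- monotonicity of q₀
  have hq₀mono : Monotone q₀ := monotone_of_deriv_nonneg
    (fun s => (hq₀ s).differentiableAt)
    (fun s => by rw [(hq₀ s).deriv]; exact Real.sqrt_nonneg _)
  -- conclusion
  refine ⟨fun s => q₀ (φ s), by show q₀ (φ 0) = (a + b) / 2; rw [hφ0, hq₀0], ?_, ?_, ?_⟩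
  · intro s
    have hcomp : HasDerivAt (fun σ => q₀ (φ σ)) (Real.sqrt (W (q₀ (φ s))) * g s (φ s)) s :=
      (hq₀ (φ s)).comp s (hφ' s)
    have hkey : Real.sqrt (W (q₀ (φ s))) * g s (φ s) =
        Real.sqrt (W (q₀ (φ s)) - ε * η (t, s)) := by
      have he : ε * η (t, s) = h s := rfl
      rcases le_or_gt |s| R with hsR | hsR
      · have hcl : cl (φ s) = φ s := hclid _ (hφabs s hsR)
        rw [he, hgdef]
        simp only []
        rw [hFdef]
        simp only []
        rw [hcl, ← Real.sqrt_mul (hVpos (φ s)).le]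
        congr 1
        have hv : W (q₀ (φ s)) ≠ 0 := (hVpos (φ s)).ne'
        field_simp
      · have h0 : h s = 0 := hh0 s hsR
        rw [hgone s _ h0, mul_one, he, h0, sub_zero]
    rw [← hkey]
    exact hcomp
  · intro s hs
    obtain ⟨ha1, ha2⟩ := hφneg s hs
    have h2s : 2 * s ≤ Real.sqrt 2 * s := by nlinarith [Real.sqrt_nonneg 2]
    constructor
    · exact hq₀mono (by linarith)
    · rw [← hq₀0]; exact hq₀mono ha2
  · intro s hs
    obtain ⟨ha1, ha2⟩ := hφpos s hs
    have h2s : Real.sqrt 2 * s ≤ 2 * s := by nlinarith [Real.sqrt_nonneg 2]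
    constructor
    · rw [← hq₀0]; exact hq₀mono ha1
    · exact hq₀mono (by linarith)
end
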